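/- arXiv:2601.17175 — 5 statements merged into one kernel-verified Lean document; each statement's English description precedes it below -/
import Mathlib

section
/- Let (M_n) be a mean-zero martingale and T an extended-valued stopping time for its filtration with E[|M_T| · 1(T < ∞)] < ∞, and set L = E[M_T · 1(T < ∞)]. Then for every p > 1, |L|^{p/(p−1)} ≤ liminf_{n→∞} P(T > n) · (E[|M_n|^p · 1(T > n)])^{1/(p−1)}. -/
open MeasureTheory Filter Set Topology ENNReal

/-- (Corollary 3.2.) With `L = E[M_T · 1(T < ∞)]`, for every `p > 1`,
`|L|^(p/(p-1)) ≤ liminf_n P(T > n) · (E[|M_n|^p · 1(T > n)])^(1/(p-1))`. -/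
theorem stopped_martingale_holder_liminf
    {Ω : Type*} {m0 : MeasurableSpace Ω} {μ : Measure Ω} [IsProbabilityMeasure μ]
    (𝓕 : Filtration ℕ m0) (M : ℕ → Ω → ℝ)
    (hM : Martingale M 𝓕 μ)
    (hmean : ∀ n, ∫ ω, M n ω ∂μ = 0)
    (T : Ω → ℕ∞)
    (hT : ∀ n : ℕ, MeasurableSet[𝓕 n] {ω | T ω ≤ (n : ℕ∞)})
    (hInt : Integrable ({ω | T ω < ⊤}.indicator (fun ω => M (T ω).toNat ω)) μ)
    (L : ℝ)
    (hL : L = ∫ ω, ({ω | T ω < ⊤}.indicator (fun ω => M (T ω).toNat ω)) ω ∂μ)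
    (p : ℝ) (hp : 1 < p) :
    ENNReal.ofReal (|L| ^ (p / (p - 1))) ≤
      Filter.liminf
        (fun n : ℕ =>
          μ {ω | (n : ℕ∞) < T ω} *
            (∫⁻ ω in {ω | (n : ℕ∞) < T ω}, ENNReal.ofReal (|M n ω| ^ p) ∂μ) ^ (1 / (p - 1)))
        atTop := by
  have hp0 : (0:ℝ) < p := one_pos.trans hp
  have hp1 : (0:ℝ) < p - 1 := sub_pos.2 hp
  set q : ℝ := p / (p - 1) with hq
  have hq0 : (0:ℝ) < q := div_pos hp0 hp1
  have hpq : p.HolderConjugate q := Real.HolderConjugate.conjExponent hp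
  have hTmeas : ∀ n : ℕ, MeasurableSet {ω | T ω ≤ (n : ℕ∞)} := fun n => 𝓕.le n _ (hT n)
  have hAmeas : ∀ n : ℕ, MeasurableSet {ω | (n : ℕ∞) < T ω} := by
    intro n
    have h : {ω | (n:ℕ∞) < T ω} = {ω | T ω ≤ (n:ℕ∞)}ᶜ := by
      ext ω; simp [not_le]
    rw [h]; exact (hTmeas n).compl
  set f : Ω → ℝ := {ω | T ω < ⊤}.indicator (fun ω => M (T ω).toNat ω) with hf
  set a : ℕ → ℝ := fun n =>
    ∫ ω, ({ω | T ω ≤ (n:ℕ∞)}.indicator (fun ω => M (T ω).toNat ω)) ω ∂μ with ha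
  set b : ℕ → ℝ := fun n =>
    ∫ ω, ({ω | (n:ℕ∞) < T ω}.indicator (M n)) ω ∂μ with hb
  have hsubset : ∀ n : ℕ, {ω | T ω ≤ (n:ℕ∞)} ⊆ {ω | T ω < ⊤} := fun n ω h =>
    lt_of_le_of_lt h (WithTop.coe_lt_top n)
  have hind : ∀ n : ℕ, {ω | T ω ≤ (n:ℕ∞)}.indicator (fun ω => M (T ω).toNat ω)
      = {ω | T ω ≤ (n:ℕ∞)}.indicator f := by
    intro n
    rw [hf, Set.indicator_indicator, Set.inter_eq_left.2 (hsubset n)]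
  have hInt_a : ∀ n : ℕ,
      Integrable ({ω | T ω ≤ (n:ℕ∞)}.indicator (fun ω => M (T ω).toNat ω)) μ := by
    intro n; rw [hind n]; exact hInt.indicator (hTmeas n)
  have hInt_b : ∀ n : ℕ, Integrable ({ω | (n:ℕ∞) < T ω}.indicator (M n)) μ :=
    fun n => (hM.integrable n).indicator (hAmeas n)
  -- a n → L by dominated convergence
  have ha_tendsto : Tendsto a atTop (𝓝 L) := by
    rw [hL]
    refine tendsto_integral_of_dominated_convergence (fun ω => ‖f ω‖) ?_ hInt.norm ?_ ?_
    · intro n; rw [hind n]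
      exact hInt.aestronglyMeasurable.indicator (hTmeas n)
    · intro n
      refine Eventually.of_forall fun ω => ?_
      rw [hind n]
      exact norm_indicator_le_norm_self f ω
    · refine Eventually.of_forall fun ω => ?_
      have hev : ∀ᶠ n : ℕ in atTop,
          ({ω | T ω ≤ (n:ℕ∞)}.indicator (fun ω => M (T ω).toNat ω)) ω = f ω := by
        by_cases hω : T ω < ⊤
        · filter_upwards [eventually_ge_atTop (T ω).toNat] with n hn
          have hTn : T ω ≤ (n:ℕ∞) := by
            rw [← ENat.coe_toNat hω.ne]
            exact_mod_cast hn
          have hmem1 : ω ∈ {ω | T ω ≤ (n:ℕ∞)} := hTn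
          have hmem2 : ω ∈ {ω | T ω < ⊤} := hω
          rw [Set.indicator_of_mem hmem1, hf, Set.indicator_of_mem hmem2]
        · refine Eventually.of_forall fun n => ?_
          have h1 : ω ∉ {ω | T ω ≤ (n:ℕ∞)} := fun h => hω (hsubset n h)
          have h2 : ω ∉ {ω | T ω < ⊤} := hω
          rw [Set.indicator_of_notMem h1, hf, Set.indicator_of_notMem h2]
      exact Tendsto.congr' (hev.mono fun n h => h.symm) tendsto_const_nhds
  -- optional stopping: a n + b n = 0
  have hab : ∀ n : ℕ, a n + b n = 0 := by
    intro n
    set τ : Ω → ℕ := fun ω => if T ω ≤ (n:ℕ∞) then (T ω).toNat else n with hτdef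
    have hτ_le : ∀ ω, τ ω ≤ n := by
      intro ω; rw [hτdef]
      dsimp only
      split_ifs with h
      · exact ENat.toNat_le_of_le_coe h
      · exact le_rfl
    have hτ : IsStoppingTime 𝓕 (fun ω => ((τ ω : ℕ) : WithTop ℕ)) := by
      intro k
      have e : {ω | ((τ ω : ℕ) : WithTop ℕ) ≤ (k : WithTop ℕ)} = {ω | τ ω ≤ k} := by
        ext ω; simp
      show MeasurableSet[𝓕 k] {ω | ((τ ω : ℕ) : WithTop ℕ) ≤ (k : WithTop ℕ)}
      rw [e]
      by_cases hk : n ≤ k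
      · have h : {ω | τ ω ≤ k} = Set.univ := eq_univ_of_forall fun ω => (hτ_le ω).trans hk
        rw [h]; exact MeasurableSet.univ
      · push_neg at hk
        have h : {ω | τ ω ≤ k} = {ω | T ω ≤ (k:ℕ∞)} := by
          ext ω
          simp only [Set.mem_setOf_eq, hτdef]
          split_ifs with h
          · constructor
            · intro h2
              calc T ω = ((T ω).toNat : ℕ∞) :=
                    (ENat.coe_toNat (h.trans_lt (WithTop.coe_lt_top n)).ne).symm
                _ ≤ (k:ℕ∞) := by exact_mod_cast h2
            · intro h2; exact ENat.toNat_le_of_le_coe h2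
          · constructor
            · intro h2; omega
            · intro h2
              exact absurd (h2.trans (by exact_mod_cast hk.le)) h
        rw [h]; exact hT k
    have hsv : stoppedValue M (fun ω => ((τ ω : ℕ) : WithTop ℕ)) = fun ω =>
        ({ω | T ω ≤ (n:ℕ∞)}.indicator (fun ω => M (T ω).toNat ω)) ω
        + ({ω | (n:ℕ∞) < T ω}.indicator (M n)) ω := by
      funext ω
      rw [stoppedValue]
      by_cases h : T ω ≤ (n:ℕ∞)
      · have hmem : ω ∈ {ω | T ω ≤ (n:ℕ∞)} := h
        have hnot : ω ∉ {ω | (n:ℕ∞) < T ω} := not_lt.mpr h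
        rw [Set.indicator_of_mem hmem, Set.indicator_of_notMem hnot]
        simp [hτdef, h, WithTop.untopA, WithTop.untopD_coe]; rfl
      · have hnot : ω ∉ {ω | T ω ≤ (n:ℕ∞)} := h
        have hmem : ω ∈ {ω | (n:ℕ∞) < T ω} := not_le.mp h
        rw [Set.indicator_of_notMem hnot, Set.indicator_of_mem hmem]
        simp [hτdef, h, WithTop.untopA, WithTop.untopD_coe]; rfl
    have h0 : ∫ ω, stoppedValue M (fun ω => ((τ ω : ℕ) : WithTop ℕ)) ω ∂μ = 0 := by
      have h1 := hM.submartingale.expected_stoppedValue_mono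
        (isStoppingTime_const 𝓕 0) hτ (fun ω => WithTop.coe_le_coe.mpr (Nat.zero_le _)) (fun ω => WithTop.coe_le_coe.mpr (hτ_le ω))
      have h2 := hM.neg.submartingale.expected_stoppedValue_mono
        (isStoppingTime_const 𝓕 0) hτ (fun ω => WithTop.coe_le_coe.mpr (Nat.zero_le _)) (fun ω => WithTop.coe_le_coe.mpr (hτ_le ω))
      rw [stoppedValue_const] at h1 h2
      have hneg : stoppedValue (-M) (fun ω => ((τ ω : ℕ) : WithTop ℕ)) = -(stoppedValue M (fun ω => ((τ ω : ℕ) : WithTop ℕ))) := rfl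
      rw [hneg] at h2
      have h2' : ∫ ω, (-(stoppedValue M (fun ω => ((τ ω : ℕ) : WithTop ℕ)))) ω ∂μ = - ∫ ω, stoppedValue M (fun ω => ((τ ω : ℕ) : WithTop ℕ)) ω ∂μ :=
        integral_neg _
      have h3 : ∫ ω, (-M) 0 ω ∂μ = 0 := by
        have : ∫ ω, (-(M 0)) ω ∂μ = - ∫ ω, M 0 ω ∂μ := integral_neg _
        simpa [hmean 0] using this
      have h1' : (0:ℝ) ≤ ∫ ω, stoppedValue M (fun ω => ((τ ω : ℕ) : WithTop ℕ)) ω ∂μ := by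
        rw [← hmean 0]; exact h1
      have h2'' : ∫ ω, stoppedValue M (fun ω => ((τ ω : ℕ) : WithTop ℕ)) ω ∂μ ≤ 0 := by
        have := h2
        rw [h3, h2'] at this
        linarith
      linarith
    rw [hsv, integral_add (hInt_a n) (hInt_b n)] at h0
    simp only [ha, hb]
    exact h0
  have hb_eq : ∀ n, b n = - a n := fun n => by linarith [hab n]
  have hb_tendsto : Tendsto b atTop (𝓝 (-L)) := by
    rw [funext hb_eq]
    exact ha_tendsto.neg
  -- per-n Hölder bound
  have hkey : ∀ n : ℕ, ENNReal.ofReal (|b n| ^ q) ≤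
      μ {ω | (n:ℕ∞) < T ω} *
        (∫⁻ ω in {ω | (n:ℕ∞) < T ω}, ENNReal.ofReal (|M n ω| ^ p) ∂μ) ^ (1 / (p - 1)) := by
    intro n
    set A : Set Ω := {ω | (n:ℕ∞) < T ω} with hA
    set I : ℝ≥0∞ := ∫⁻ ω in A, ENNReal.ofReal (|M n ω| ^ p) ∂μ with hI
    have hMn : Measurable (M n) := ((hM.stronglyAdapted n).mono (𝓕.le n)).measurable
    -- step 1: |b n| ≤ ∫_A |M n|
    have h1 : ENNReal.ofReal |b n| ≤ ∫⁻ ω in A, ENNReal.ofReal |M n ω| ∂μ := by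
      have habs : |b n| ≤ ∫ ω, |A.indicator (M n) ω| ∂μ := by
        simpa [Real.norm_eq_abs, hb] using
          norm_integral_le_integral_norm (μ := μ) (A.indicator (M n))
      calc ENNReal.ofReal |b n| ≤ ENNReal.ofReal (∫ ω, |A.indicator (M n) ω| ∂μ) :=
            ENNReal.ofReal_le_ofReal habs
        _ = ∫⁻ ω, ENNReal.ofReal |A.indicator (M n) ω| ∂μ :=
            ofReal_integral_eq_lintegral_ofReal (hInt_b n).abs
              (Eventually.of_forall fun ω => abs_nonneg _)
        _ = ∫⁻ ω, A.indicator (fun ω => ENNReal.ofReal |M n ω|) ω ∂μ := by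
            refine lintegral_congr fun ω => ?_
            by_cases hω : ω ∈ A
            · rw [Set.indicator_of_mem hω, Set.indicator_of_mem hω]
            · rw [Set.indicator_of_notMem hω, Set.indicator_of_notMem hω]
              simp
        _ = ∫⁻ ω in A, ENNReal.ofReal |M n ω| ∂μ := lintegral_indicator (hAmeas n) _
    -- step 2: Hölder
    have h2 : ∫⁻ ω in A, ENNReal.ofReal |M n ω| ∂μ ≤ I ^ (1/p) * (μ A) ^ (1/q) := by
      have hmf : AEMeasurable (A.indicator (fun ω => ENNReal.ofReal |M n ω|)) μ :=
        ((ENNReal.measurable_ofReal.comp hMn.abs).indicator (hAmeas n)).aemeasurable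
      have hmg : AEMeasurable (A.indicator (fun _ : Ω => (1:ℝ≥0∞))) μ :=
        (measurable_const.indicator (hAmeas n)).aemeasurable
      have hH := ENNReal.lintegral_mul_le_Lp_mul_Lq μ hpq hmf hmg
      have e1 : (A.indicator (fun ω => ENNReal.ofReal |M n ω|) *
          A.indicator (fun _ : Ω => (1:ℝ≥0∞)))
          = A.indicator (fun ω => ENNReal.ofReal |M n ω|) := by
        funext ω
        by_cases hω : ω ∈ A <;>
          simp [Set.indicator_of_mem, Set.indicator_of_notMem, hω]
      have e2 : ∫⁻ ω, (A.indicator (fun ω => ENNReal.ofReal |M n ω|)) ω ^ p ∂μ = I := by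
        rw [hI, ← lintegral_indicator (hAmeas n)]
        refine lintegral_congr fun ω => ?_
        by_cases hω : ω ∈ A
        · rw [Set.indicator_of_mem hω, Set.indicator_of_mem hω,
            ENNReal.ofReal_rpow_of_nonneg (abs_nonneg _) hp0.le]
        · rw [Set.indicator_of_notMem hω, Set.indicator_of_notMem hω,
            ENNReal.zero_rpow_of_pos hp0]
      have e3 : ∫⁻ ω, (A.indicator (fun _ : Ω => (1:ℝ≥0∞))) ω ^ q ∂μ = μ A := by
        rw [← lintegral_indicator_one (hAmeas n)]
        refine lintegral_congr fun ω => ?_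
        by_cases hω : ω ∈ A
        · simp [Set.indicator_of_mem hω, ENNReal.one_rpow, ← hA]
        · simp [Set.indicator_of_notMem hω, ENNReal.zero_rpow_of_pos hq0, ← hA]
      rw [e1, e2, e3, lintegral_indicator (hAmeas n)] at hH
      exact hH
    -- step 3: raise to power q
    have hq_ne : q ≠ 0 := hq0.ne'
    calc ENNReal.ofReal (|b n| ^ q) = (ENNReal.ofReal |b n|) ^ q :=
          (ENNReal.ofReal_rpow_of_nonneg (abs_nonneg _) hq0.le).symm
      _ ≤ (I ^ (1/p) * (μ A) ^ (1/q)) ^ q :=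
          ENNReal.rpow_le_rpow (h1.trans h2) hq0.le
      _ = I ^ (1/(p-1)) * μ A := by
          have eq1 : (1/p) * q = 1/(p-1) := by
            rw [hq]; field_simp
          have eq2 : (1/q) * q = 1 := by
            field_simp
          rw [ENNReal.mul_rpow_of_nonneg _ _ hq0.le, ← ENNReal.rpow_mul,
            ← ENNReal.rpow_mul, eq1, eq2, ENNReal.rpow_one]
      _ = μ A * I ^ (1/(p-1)) := mul_comm _ _
  -- pass to liminf
  have hlim : Tendsto (fun n => ENNReal.ofReal (|b n| ^ q)) atTop
      (𝓝 (ENNReal.ofReal (|L| ^ q))) := by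
    have habs : Tendsto (fun n => |b n|) atTop (𝓝 |L|) := by
      simpa using hb_tendsto.abs
    have hpow : Tendsto (fun n => |b n| ^ q) atTop (𝓝 (|L| ^ q)) :=
      ((Real.continuousAt_rpow_const _ _ (Or.inr hq0.le)).tendsto).comp habs
    exact (ENNReal.continuous_ofReal.tendsto _).comp hpow
  calc ENNReal.ofReal (|L| ^ q)
      = liminf (fun n => ENNReal.ofReal (|b n| ^ q)) atTop := hlim.liminf_eq.symm
    _ ≤ liminf (fun n : ℕ =>
          μ {ω | (n : ℕ∞) < T ω} *
            (∫⁻ ω in {ω | (n : ℕ∞) < T ω}, ENNReal.ofReal (|M n ω| ^ p) ∂μ) ^ (1 / (p - 1)))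
        atTop := liminf_le_liminf (Eventually.of_forall hkey)
end

section
/- Let (M_n) be a mean-zero martingale with E[M_n²] = n for every n, and let T be an extended-valued stopping time for its filtration with E[|M_T| · 1(T < ∞)] < ∞, and set L = E[M_T · 1(T < ∞)]. Then liminf_{n→∞} n · P(T > n) ≥ L². -/
open MeasureTheory Filter Set Topology ENNReal

/-- (Corollary 3.3.) If `(M n)` is a mean-zero martingale with
`E[M_n²] = n` for every `n`, and `T` is an extended-valued stopping time with
`E[|M_T| · 1(T < ∞)] < ∞`, then with `L = E[M_T · 1(T < ∞)]` we have
`liminf_n n · P(T > n) ≥ L²`. -/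
theorem stopped_martingale_tail_liminf
    {Ω : Type*} {m0 : MeasurableSpace Ω} {μ : Measure Ω} [IsProbabilityMeasure μ]
    (𝓕 : Filtration ℕ m0) (M : ℕ → Ω → ℝ)
    (hM : Martingale M 𝓕 μ)
    (hmean : ∀ n, ∫ ω, M n ω ∂μ = 0)
    (hvar : ∀ n : ℕ, ∫ ω, (M n ω) ^ 2 ∂μ = (n : ℝ))
    (T : Ω → ℕ∞)
    (hT : ∀ n : ℕ, MeasurableSet[𝓕 n] {ω | T ω ≤ (n : ℕ∞)})
    (hInt : Integrable ({ω | T ω < ⊤}.indicator (fun ω => M (T ω).toNat ω)) μ)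
    (L : ℝ)
    (hL : L = ∫ ω, ({ω | T ω < ⊤}.indicator (fun ω => M (T ω).toNat ω)) ω ∂μ) :
    ENNReal.ofReal (L ^ 2) ≤
      Filter.liminf (fun n : ℕ => (n : ℝ≥0∞) * μ {ω | (n : ℕ∞) < T ω}) atTop := by
  classical
  set g : Ω → ℝ := {ω | T ω < ⊤}.indicator (fun ω => M (T ω).toNat ω) with hg
  -- the truncated stopping times
  set τ : ℕ → Ω → ℕ := fun n ω => (min (T ω) (n : ℕ∞)).toNat with hτdef
  have hτle : ∀ n ω, τ n ω ≤ n := by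
    intro n ω
    have := ENat.toNat_le_toNat (min_le_right (T ω) (n : ℕ∞)) (by simp)
    simpa using this
  have hτiff : ∀ n k : ℕ, ∀ ω, τ n ω ≤ k ↔ min (T ω) (n : ℕ∞) ≤ (k : ℕ∞) := by
    intro n k ω
    have hne : min (T ω) (n : ℕ∞) ≠ ⊤ :=
      ne_top_of_le_ne_top (by simp) (min_le_right _ _)
    conv_rhs => rw [← ENat.coe_toNat hne]
    exact (Nat.cast_le).symm
  set σ : ℕ → Ω → WithTop ℕ := fun n ω => WithTop.some (τ n ω) with hσdef
  have hσle : ∀ n ω, σ n ω ≤ n := fun n ω => WithTop.coe_le_coe.mpr (hτle n ω)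
  have hstop : ∀ n, IsStoppingTime 𝓕 (σ n) := by
    intro n k
    by_cases hk : n ≤ k
    · have : {ω | σ n ω ≤ WithTop.some k} = Set.univ :=
        Set.eq_univ_of_forall fun ω => WithTop.coe_le_coe.mpr (le_trans (hτle n ω) hk)
      rw [this]; exact MeasurableSet.univ
    · have : {ω | σ n ω ≤ WithTop.some k} = {ω | T ω ≤ (k : ℕ∞)} := by
        ext ω
        simp only [Set.mem_setOf_eq, hσdef, WithTop.coe_le_coe, hτiff n k ω, min_le_iff]
        constructor
        · rintro (h | h)
          · exact h
          · exact absurd (Nat.cast_le.mp h) hk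
        · exact fun h => Or.inl h
      rw [this]
      exact hT k
  -- decomposition of the stopped value
  have hFg : ∀ n : ℕ, {ω | T ω ≤ (n : ℕ∞)}.indicator (fun ω => M (T ω).toNat ω)
      = {ω | T ω ≤ (n : ℕ∞)}.indicator g := by
    intro n
    ext ω
    by_cases h : T ω ≤ (n : ℕ∞)
    · have h' : T ω < ⊤ := lt_of_le_of_lt h (by simp [lt_top_iff_ne_top])
      simp [Set.indicator_apply, h, hg, h']
    · simp [Set.indicator_apply, h]
  have hdecomp : ∀ n : ℕ, stoppedValue M (σ n)
      = {ω | T ω ≤ (n : ℕ∞)}.indicator g + {ω | (n : ℕ∞) < T ω}.indicator (M n) := by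
    intro n
    rw [← hFg]
    ext ω
    by_cases h : T ω ≤ (n : ℕ∞)
    · have h2 : ¬ ((n : ℕ∞) < T ω) := not_lt.mpr h
      simp only [stoppedValue, Pi.add_apply, Set.indicator_apply, Set.mem_setOf_eq, h, h2,
        if_true, if_false, add_zero]
      congr 1
      simp [hσdef, hτdef, WithTop.untopA_eq_untop, min_eq_left h]
      rfl
    · have h2 : (n : ℕ∞) < T ω := not_le.mp h
      simp only [stoppedValue, Pi.add_apply, Set.indicator_apply, Set.mem_setOf_eq, h, h2,
        if_true, if_false, zero_add]
      congr 1
      simp [hσdef, hτdef, WithTop.untopA_eq_untop, min_eq_right (le_of_lt h2)]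
      rfl
  -- measurability of the relevant sets
  have hmle : ∀ n : ℕ, MeasurableSet {ω | T ω ≤ (n : ℕ∞)} := fun n => (𝓕.le n) _ (hT n)
  have hmgt : ∀ n : ℕ, MeasurableSet {ω | (n : ℕ∞) < T ω} := by
    intro n
    have := (hmle n).compl
    simpa [Set.compl_setOf, not_le] using this
  -- integrability
  have hIntF : ∀ n : ℕ, Integrable ({ω | T ω ≤ (n : ℕ∞)}.indicator g) μ :=
    fun n => hInt.indicator (hmle n)
  have hIntSV : ∀ n : ℕ, Integrable (stoppedValue M (σ n)) μ := fun n =>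
    integrable_stoppedValue ℕ (hstop n) hM.integrable (hσle n)
  have hIntJ : ∀ n : ℕ, Integrable ({ω | (n : ℕ∞) < T ω}.indicator (M n)) μ := by
    intro n
    have : {ω | (n : ℕ∞) < T ω}.indicator (M n)
        = stoppedValue M (σ n) - {ω | T ω ≤ (n : ℕ∞)}.indicator g := by
      rw [hdecomp n]; ring
    rw [this]
    exact (hIntSV n).sub (hIntF n)
  -- optional stopping : the expectation of the stopped value is 0
  have hzero : ∀ n : ℕ, ∫ ω, stoppedValue M (σ n) ω ∂μ = 0 := by
    intro n
    have h0 : IsStoppingTime 𝓕 (fun _ : Ω => ((0 : ℕ) : WithTop ℕ)) := isStoppingTime_const 𝓕 0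
    have hle : (fun _ : Ω => ((0 : ℕ) : WithTop ℕ)) ≤ σ n := fun ω => WithTop.coe_le_coe.mpr (Nat.zero_le _)
    have h1 : ∫ ω, stoppedValue M (fun _ => ((0 : ℕ) : WithTop ℕ)) ω ∂μ ≤ ∫ ω, stoppedValue M (σ n) ω ∂μ :=
      hM.submartingale.expected_stoppedValue_mono h0 (hstop n) hle (hσle n)
    have h2 : ∫ ω, stoppedValue (-M) (fun _ => ((0 : ℕ) : WithTop ℕ)) ω ∂μ ≤ ∫ ω, stoppedValue (-M) (σ n) ω ∂μ :=
      hM.neg.submartingale.expected_stoppedValue_mono h0 (hstop n) hle (hσle n)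
    have hsvneg : stoppedValue (-M) (σ n) = -stoppedValue M (σ n) := rfl
    have hsvneg0 : stoppedValue (-M) (fun _ : Ω => ((0:ℕ) : WithTop ℕ)) = -stoppedValue M (fun _ : Ω => ((0:ℕ) : WithTop ℕ)) :=
      rfl
    rw [hsvneg, hsvneg0] at h2
    simp only [Pi.neg_apply, integral_neg, neg_le_neg_iff] at h2
    have h1' : (0:ℝ) ≤ ∫ ω, stoppedValue M (σ n) ω ∂μ := by
      refine le_trans (le_of_eq ?_) h1
      rw [show stoppedValue M (fun _ : Ω => ((0:ℕ) : WithTop ℕ)) = M 0 from stoppedValue_const M 0]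
      exact (hmean 0).symm
    have h2' : ∫ ω, stoppedValue M (σ n) ω ∂μ ≤ (0:ℝ) := by
      refine le_trans h2 (le_of_eq ?_)
      rw [show stoppedValue M (fun _ : Ω => ((0:ℕ) : WithTop ℕ)) = M 0 from stoppedValue_const M 0]
      exact hmean 0
    exact le_antisymm h2' h1'
  have hsum : ∀ n : ℕ, (∫ ω, ({ω | T ω ≤ (n : ℕ∞)}.indicator g) ω ∂μ)
      + ∫ ω, ({ω | (n : ℕ∞) < T ω}.indicator (M n)) ω ∂μ = 0 := by
    intro n
    rw [← integral_add (hIntF n) (hIntJ n)]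
    rw [← hzero n]
    congr 1
    ext ω
    rw [hdecomp n]
    rfl
  -- convergence of the truncated expectations to L
  have hA : Tendsto (fun n : ℕ => ∫ ω, ({ω | T ω ≤ (n : ℕ∞)}.indicator g) ω ∂μ)
      atTop (𝓝 L) := by
    rw [hL]
    refine tendsto_integral_of_dominated_convergence (fun ω => |g ω|)
      (fun n => (hInt.aestronglyMeasurable.indicator (hmle n))) hInt.abs ?_ ?_
    · intro n
      filter_upwards with ω
      simpa [Real.norm_eq_abs] using
        norm_indicator_le_norm_self (s := {ω | T ω ≤ (n : ℕ∞)}) g ω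
    · filter_upwards with ω
      by_cases h : T ω < ⊤
      · lift T ω to ℕ using h.ne with k hk
        apply tendsto_nhds_of_eventually_eq
        filter_upwards [eventually_ge_atTop k] with n hn
        have : T ω ≤ (n : ℕ∞) := by rw [← hk]; exact_mod_cast hn
        simp [Set.indicator_apply, this]
      · have hgω : g ω = 0 := by simp [hg, Set.indicator_apply, h]
        have : ∀ n : ℕ, ({ω | T ω ≤ (n : ℕ∞)}.indicator g) ω = 0 := by
          intro n
          have : ¬ T ω ≤ (n : ℕ∞) := by
            intro hle
            exact h (lt_of_le_of_lt hle (by simp [lt_top_iff_ne_top]))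
          simp [Set.indicator_apply, this]
        simp only [this, hgω]
        exact tendsto_const_nhds
  -- Cauchy–Schwarz bound, for n ≥ 1
  have key : ∀ᶠ n : ℕ in atTop,
      ENNReal.ofReal ((∫ ω, ({ω | T ω ≤ (n : ℕ∞)}.indicator g) ω ∂μ) ^ 2)
        ≤ (n : ℝ≥0∞) * μ {ω | (n : ℕ∞) < T ω} := by
    filter_upwards [eventually_ge_atTop 1] with n hn
    set A := {ω | (n : ℕ∞) < T ω} with hA'
    set t : ℝ := (μ A).toReal with ht
    have ht0 : 0 ≤ t := ENNReal.toReal_nonneg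
    -- square integrability of M n
    have hsq : Integrable (fun ω => (M n ω) ^ 2) μ := by
      by_contra hc
      have := hvar n
      rw [integral_undef hc] at this
      have : (n : ℝ) = 0 := this.symm
      have : n = 0 := by exact_mod_cast this
      omega
    have h2 : MemLp (M n) 2 μ :=
      (memLp_two_iff_integrable_sq (hM.integrable n).aestronglyMeasurable).mpr hsq
    have habs : MemLp (fun ω => |M n ω|) 2 μ := by
      simpa [Real.norm_eq_abs] using h2.norm
    have hind : MemLp (A.indicator fun _ => (1 : ℝ)) 2 μ :=
      memLp_indicator_const 2 (hmgt n) 1 (Or.inr (measure_ne_top μ A))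
    have hpq : Real.HolderConjugate 2 2 := Real.HolderConjugate.two_two
    have hof2 : ENNReal.ofReal (2 : ℝ) = 2 := by norm_num
    have CS := integral_mul_le_Lp_mul_Lq_of_nonneg (μ := μ)
      (f := fun ω => |M n ω|) (g := A.indicator fun _ => (1 : ℝ)) hpq
      (Filter.Eventually.of_forall fun ω => abs_nonneg (M n ω))
      (Filter.Eventually.of_forall fun ω => Set.indicator_apply_nonneg fun _ => zero_le_one)
      (by rw [hof2]; exact habs) (by rw [hof2]; exact hind)
    have hMn2 : ∫ ω, |M n ω| ^ (2 : ℝ) ∂μ = (n : ℝ) := by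
      rw [← hvar n]
      apply integral_congr_ae
      filter_upwards with ω
      rw [show (2 : ℝ) = ((2 : ℕ) : ℝ) by norm_num, Real.rpow_natCast, sq_abs]
    have hind2 : ∫ ω, (A.indicator (fun _ => (1 : ℝ)) ω) ^ (2 : ℝ) ∂μ = t := by
      have : ∀ ω, (A.indicator (fun _ => (1 : ℝ)) ω) ^ (2 : ℝ)
          = A.indicator (fun _ => (1 : ℝ)) ω := by
        intro ω
        by_cases h : ω ∈ A
        · simp [Set.indicator_of_mem h]
        · simp [Set.indicator_of_notMem h, Real.zero_rpow (by norm_num : (2:ℝ) ≠ 0)]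
      simp only [this]
      rw [ht, integral_indicator_const (1 : ℝ) (hmgt n), smul_eq_mul, mul_one, measureReal_def]
    rw [hMn2, hind2] at CS
    -- relate the integrals
    have hJeq : ∫ ω, (A.indicator (M n)) ω ∂μ
        = - ∫ ω, ({ω | T ω ≤ (n : ℕ∞)}.indicator g) ω ∂μ := by
      have := hsum n
      linarith
    have hnormJ : ∀ ω, ‖(A.indicator (M n)) ω‖ = |M n ω| * A.indicator (fun _ => (1:ℝ)) ω := by
      intro ω
      by_cases h : ω ∈ A
      · simp [Set.indicator_of_mem h, Real.norm_eq_abs]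
      · simp [Set.indicator_of_notMem h]
    have habsJ : |∫ ω, (A.indicator (M n)) ω ∂μ| ≤ (n : ℝ) ^ ((1:ℝ)/2) * t ^ ((1:ℝ)/2) := by
      calc |∫ ω, (A.indicator (M n)) ω ∂μ| ≤ ∫ ω, ‖(A.indicator (M n)) ω‖ ∂μ := by
            simpa [Real.norm_eq_abs] using
              norm_integral_le_integral_norm (fun ω => (A.indicator (M n)) ω) (μ := μ)
        _ = ∫ ω, |M n ω| * A.indicator (fun _ => (1:ℝ)) ω ∂μ := by
            apply integral_congr_ae
            filter_upwards with ω
            exact hnormJ ω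
        _ ≤ (n : ℝ) ^ ((1:ℝ)/2) * t ^ ((1:ℝ)/2) := by
            simpa using CS
    have hsq_bound : (∫ ω, ({ω | T ω ≤ (n : ℕ∞)}.indicator g) ω ∂μ) ^ 2 ≤ (n : ℝ) * t := by
      have h1 : (∫ ω, ({ω | T ω ≤ (n : ℕ∞)}.indicator g) ω ∂μ) ^ 2
          = |∫ ω, (A.indicator (M n)) ω ∂μ| ^ 2 := by
        rw [sq_abs, hJeq, neg_pow]
        ring
      have h2' : |∫ ω, (A.indicator (M n)) ω ∂μ| ^ 2
          ≤ ((n : ℝ) ^ ((1:ℝ)/2) * t ^ ((1:ℝ)/2)) ^ 2 :=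
        pow_le_pow_left₀ (abs_nonneg _) habsJ 2
      have h3 : ((n : ℝ) ^ ((1:ℝ)/2) * t ^ ((1:ℝ)/2)) ^ 2 = (n : ℝ) * t := by
        rw [mul_pow, ← Real.rpow_natCast ((n:ℝ) ^ ((1:ℝ)/2)) 2,
          ← Real.rpow_natCast (t ^ ((1:ℝ)/2)) 2,
          ← Real.rpow_mul (Nat.cast_nonneg n), ← Real.rpow_mul ht0]
        norm_num
      rw [h1]
      exact h2'.trans (le_of_eq h3)
    calc ENNReal.ofReal ((∫ ω, ({ω | T ω ≤ (n : ℕ∞)}.indicator g) ω ∂μ) ^ 2)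
        ≤ ENNReal.ofReal ((n : ℝ) * t) := ENNReal.ofReal_le_ofReal hsq_bound
      _ = (n : ℝ≥0∞) * μ A := by
          rw [ENNReal.ofReal_mul (Nat.cast_nonneg n), ENNReal.ofReal_natCast, ht,
            ENNReal.ofReal_toReal (measure_ne_top μ A)]
  -- conclude via liminf
  have hlim : Tendsto (fun n : ℕ =>
      ENNReal.ofReal ((∫ ω, ({ω | T ω ≤ (n : ℕ∞)}.indicator g) ω ∂μ) ^ 2)) atTop
      (𝓝 (ENNReal.ofReal (L ^ 2))) :=
    (ENNReal.continuous_ofReal.tendsto _).comp (hA.pow 2)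
  calc ENNReal.ofReal (L ^ 2)
      = Filter.liminf (fun n : ℕ =>
          ENNReal.ofReal ((∫ ω, ({ω | T ω ≤ (n : ℕ∞)}.indicator g) ω ∂μ) ^ 2)) atTop :=
        hlim.liminf_eq.symm
    _ ≤ Filter.liminf (fun n : ℕ => (n : ℝ≥0∞) * μ {ω | (n : ℕ∞) < T ω}) atTop :=
        liminf_le_liminf key
end

section
/- Let (M_n) be a mean-zero martingale satisfying: (i) lim_{ε↓0} limsup_{k→∞} P(sup_{n≥k} |M_n − M_k| > ε) = 1; and (ii) there exists B < ∞ such that for every n ≥ 1 with P(T = n) > 0, E[M_n · 1(T = n)] ≤ B · P(T = n), where T = inf{n ≥ 1 : M_n > 0} (T = ∞ if no such n exists). Then P(T < ∞) = 1 and E[M_T] ≤ B. -/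
open MeasureTheory Filter Set Topology ENNReal

section aux
variable {Ω : Type*} (M : ℕ → Ω → ℝ) (T : Ω → ℕ∞)
  (hTdef : ∀ ω, T ω = sInf ((fun n : ℕ => (n : ℕ∞)) '' {n : ℕ | 1 ≤ n ∧ 0 < M n ω}))

include hTdef

lemma Tle : ∀ ω (n : ℕ), 1 ≤ n → 0 < M n ω → T ω ≤ n := by
  intro ω n h1 h2
  rw [hTdef]
  exact sInf_le ⟨n, ⟨h1, h2⟩, rfl⟩

lemma Tfin : ∀ ω (n : ℕ), T ω = (n : ℕ∞) ↔
    (1 ≤ n ∧ 0 < M n ω ∧ ∀ j, 1 ≤ j → j < n → M j ω ≤ 0) := by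
  intro ω n
  constructor
  · intro h
    have hne : {m : ℕ | 1 ≤ m ∧ 0 < M m ω}.Nonempty := by
      by_contra hc
      rw [Set.not_nonempty_iff_eq_empty] at hc
      rw [hTdef, hc, Set.image_empty, sInf_empty] at h
      exact (ENat.coe_ne_top n) h.symm
    set m0 := sInf {m : ℕ | 1 ≤ m ∧ 0 < M m ω} with hm0
    have hmem : m0 ∈ {m : ℕ | 1 ≤ m ∧ 0 < M m ω} := Nat.sInf_mem hne
    have hTm0 : T ω = (m0 : ℕ∞) := by
      rw [hTdef]
      refine le_antisymm (sInf_le ⟨m0, hmem, rfl⟩) (le_sInf ?_)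
      rintro _ ⟨j, hj, rfl⟩
      simp only [hm0]
      exact_mod_cast Nat.sInf_le hj
    have hnm : n = m0 := by
      rw [h] at hTm0
      exact_mod_cast hTm0
    subst hnm
    refine ⟨hmem.1, hmem.2, fun j hj1 hjn => ?_⟩
    by_contra hc
    push_neg at hc
    have : m0 ≤ j := Nat.sInf_le (Set.mem_setOf.2 ⟨hj1, hc⟩)
    omega
  · rintro ⟨h1, h2, h3⟩
    rw [hTdef]
    refine le_antisymm (sInf_le ⟨n, ⟨h1, h2⟩, rfl⟩) (le_sInf ?_)
    rintro _ ⟨j, ⟨hj1, hj2⟩, rfl⟩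
    by_contra hc
    push_neg at hc
    have hjn : j < n := by exact_mod_cast hc
    exact absurd hj2 (not_lt.2 (h3 j hj1 hjn))

lemma Mnonpos : ∀ (n : ℕ) ω, 1 ≤ n → (n : ℕ∞) < T ω → M n ω ≤ 0 := by
  intro n ω h1 h2
  by_contra hc
  push_neg at hc
  exact absurd (Tle M T hTdef ω n h1 hc) (not_le.2 h2)

lemma Tpos : ∀ ω, (0 : ℕ∞) < T ω := by
  intro ω
  rcases eq_or_ne (T ω) ⊤ with h | h
  · rw [h]; exact lt_of_lt_of_le (by norm_num : (0:ℕ∞) < 1) le_top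
  · obtain ⟨n, hn⟩ := WithTop.ne_top_iff_exists.1 h
    have := ((Tfin M T hTdef ω n).1 hn.symm).1
    rw [← hn]
    exact Nat.cast_pos.2 (Nat.lt_of_lt_of_le Nat.zero_lt_one this)

lemma Efin : ∀ (n : ℕ) ω, ¬ ((n:ℕ∞) < T ω) ↔ ∃ j ∈ Finset.range (n+1), T ω = (j : ℕ∞) := by
  intro n ω
  rw [not_lt]
  constructor
  · intro h
    have hne : T ω ≠ ⊤ := by
      intro hc; rw [hc] at h; exact absurd (le_antisymm le_top h) (by simp)
    obtain ⟨j, hj⟩ := WithTop.ne_top_iff_exists.1 hne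
    refine ⟨j, Finset.mem_range.2 ?_, hj.symm⟩
    rw [← hj] at h
    have : j ≤ n := Nat.cast_le.1 h
    omega
  · rintro ⟨j, hj, hj2⟩
    rw [hj2]
    exact_mod_cast Nat.lt_succ_iff.1 (Finset.mem_range.1 hj)

end aux

/-- (Theorem 4.1.) Let `(M n)` be a mean-zero martingale such that
(i) `lim_{ε↓0} limsup_k P(sup_{n≥k} |M_n − M_k| > ε) = 1`, and
(ii) there is `B < ∞` with `E[M_n · 1(T = n)] ≤ B · P(T = n)` whenever `P(T = n) > 0`,
where `T = inf{n ≥ 1 : M_n > 0}`.  Then `P(T < ∞) = 1` and `E[M_T] ≤ B`. -/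
theorem first_positive_time_finite_of_wobble
    {Ω : Type*} {m0 : MeasurableSpace Ω} {μ : Measure Ω} [IsProbabilityMeasure μ]
    (𝓕 : Filtration ℕ m0) (M : ℕ → Ω → ℝ)
    (hM : Martingale M 𝓕 μ)
    (hmean : ∀ n, ∫ ω, M n ω ∂μ = 0)
    (hwobble :
      Tendsto (fun ε : ℝ =>
          Filter.limsup (fun k : ℕ => μ {ω | ∃ n, k ≤ n ∧ ε < |M n ω - M k ω|}) atTop)
        (𝓝[>] (0 : ℝ)) (𝓝 (1 : ℝ≥0∞)))
    (T : Ω → ℕ∞)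
    (hTdef : ∀ ω, T ω = sInf ((fun n : ℕ => (n : ℕ∞)) '' {n : ℕ | 1 ≤ n ∧ 0 < M n ω}))
    (B : ℝ)
    (hover : ∀ n : ℕ, 1 ≤ n → 0 < μ {ω | T ω = (n : ℕ∞)} →
      ∫ ω in {ω | T ω = (n : ℕ∞)}, M n ω ∂μ ≤ B * (μ {ω | T ω = (n : ℕ∞)}).toReal) :
    μ {ω | T ω < ⊤} = 1 ∧ ∫ ω, M (T ω).toNat ω ∂μ ≤ B := by
  classical
  set D : ℕ → Set Ω := fun j => {ω | T ω = (j : ℕ∞)} with hD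
  set E : ℕ → Set Ω := fun n => {ω | (n : ℕ∞) < T ω} with hE
  have hD0 : D 0 = ∅ := by
    ext ω
    simp only [hD, Set.mem_setOf_eq, Set.mem_empty_iff_false, iff_false]
    intro h
    exact absurd ((Tfin M T hTdef ω 0).1 (by exact_mod_cast h)).1 (by norm_num)
  have hMmeasF : ∀ i n, i ≤ n → Measurable[𝓕 n] (M i) :=
    fun i n h => ((hM.stronglyAdapted i).mono (𝓕.mono h)).measurable
  have hMmeas : ∀ i, Measurable (M i) :=
    fun i => ((hM.stronglyAdapted i).mono (𝓕.le i)).measurable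
  have hDmeas : ∀ j, MeasurableSet[𝓕 j] (D j) := by
    intro j
    rcases Nat.eq_zero_or_pos j with rfl | hj
    · rw [hD0]; exact @MeasurableSet.empty _ (𝓕 0)
    · have hDeq : D j = {ω | 0 < M j ω} ∩ ⋂ i ∈ Finset.range j, {ω | M i ω ≤ 0 ∨ i = 0} := by
        ext ω
        simp only [hD, Set.mem_inter_iff, Set.mem_iInter, Set.mem_setOf_eq, Finset.mem_range]
        rw [Tfin M T hTdef ω j]
        constructor
        · rintro ⟨h1, h2, h3⟩
          exact ⟨h2, fun i hi => if h : i = 0 then Or.inr h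
            else Or.inl (h3 i (Nat.one_le_iff_ne_zero.2 h) hi)⟩
        · rintro ⟨h2, h3⟩
          exact ⟨hj, h2, fun i hi1 hi2 => (h3 i hi2).resolve_right (by omega)⟩
      rw [hDeq]
      refine MeasurableSet.inter (measurableSet_lt measurable_const (hMmeasF j j le_rfl)) ?_
      refine Finset.measurableSet_biInter _ (fun i hi => ?_)
      rcases Nat.eq_zero_or_pos i with rfl | hipos
      · simp only [Set.setOf_or]
        exact MeasurableSet.union (measurableSet_le (hMmeasF 0 j (Nat.zero_le j)) measurable_const)
          (by simp)
      · have : {ω | M i ω ≤ 0 ∨ i = 0} = {ω | M i ω ≤ 0} := by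
          ext ω; simp [Nat.pos_iff_ne_zero.1 hipos]
        rw [this]
        exact measurableSet_le (hMmeasF i j (le_of_lt (Finset.mem_range.1 hi))) measurable_const
  have hDm0 : ∀ j, MeasurableSet (D j) := fun j => 𝓕.le j _ (hDmeas j)
  have hDdisj : Pairwise (Function.onFun Disjoint D) := by
    intro i j hij
    rw [Function.onFun, Set.disjoint_left]
    intro ω hi hj
    rw [hD] at hi hj
    exact hij (by exact_mod_cast hi.symm.trans hj)
  have hEeq : ∀ n, E n = (⋃ j ∈ Finset.range (n + 1), D j)ᶜ := by
    intro n
    ext ω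
    simp only [hE, hD, Set.mem_setOf_eq, Set.mem_compl_iff, Set.mem_iUnion]
    constructor
    · intro h hex
      obtain ⟨i, hi, hTi⟩ := hex
      exact (Efin M T hTdef n ω).2 ⟨i, hi, hTi⟩ h
    · intro h
      by_contra h2
      obtain ⟨i, hi, hTi⟩ := (Efin M T hTdef n ω).1 h2
      exact h ⟨i, hi, hTi⟩
  have hEmeas : ∀ n, MeasurableSet[𝓕 n] (E n) := by
    intro n
    rw [hEeq]
    exact (Finset.measurableSet_biUnion _ (fun j hj =>
      (𝓕.mono (Nat.lt_succ_iff.1 (Finset.mem_range.1 hj))) _ (hDmeas j))).compl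
  have hEm0 : ∀ n, MeasurableSet (E n) := fun n => 𝓕.le n _ (hEmeas n)
  set N : ℕ → Ω → ℝ := fun n ω =>
    (∑ j ∈ Finset.range (n + 1), (D j).indicator (M j) ω) + (E n).indicator (M n) ω with hN
  have hN0 : ∀ ω, N 0 ω = M 0 ω := by
    intro ω
    simp only [hN, Finset.range_one, Finset.sum_singleton, hD0, Set.indicator_empty,
      Pi.zero_apply, zero_add]
    rw [Set.indicator_of_mem]
    exact Tpos M T hTdef ω
  have hmemE : ∀ n ω, ω ∈ E n ↔ (n : ℕ∞) < T ω := fun n ω => Iff.rfl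
  have hmemD : ∀ j ω, ω ∈ D j ↔ T ω = (j : ℕ∞) := fun j ω => Iff.rfl
  have hsplit : ∀ n ω, (D (n + 1)).indicator (M (n + 1)) ω + (E (n + 1)).indicator (M (n + 1)) ω
      = (E n).indicator (M (n + 1)) ω := by
    intro n ω
    by_cases h : ω ∈ E n
    · rw [Set.indicator_of_mem h]
      have hlt : (n : ℕ∞) < T ω := h
      by_cases h2 : T ω = ((n + 1 : ℕ) : ℕ∞)
      · rw [Set.indicator_of_mem (show ω ∈ D (n+1) from h2), Set.indicator_of_notMem, add_zero]
        intro hc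
        rw [hmemE] at hc
        rw [h2] at hc
        exact absurd hc (lt_irrefl _)
      · have hlt2 : ((n + 1 : ℕ) : ℕ∞) < T ω := by
          rcases eq_or_ne (T ω) ⊤ with ht | ht
          · rw [ht]; exact lt_of_le_of_ne le_top (ENat.coe_ne_top (n+1))
          · lift T ω to ℕ using ht with m hm
            have h1 : n < m := Nat.cast_lt.1 hlt
            have h3 : m ≠ n + 1 := fun hc => h2 (by exact_mod_cast hc)
            exact Nat.cast_lt.2 (by omega)
        rw [Set.indicator_of_notMem (show ω ∉ D (n+1) from fun hc => h2 hc), Set.indicator_of_mem (show ω ∈ E (n+1) from hlt2), zero_add]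
    · have hle : T ω ≤ (n : ℕ∞) := not_lt.1 h
      rw [Set.indicator_of_notMem h, Set.indicator_of_notMem, Set.indicator_of_notMem, add_zero]
      · intro hc
        rw [hmemE] at hc
        exact absurd (lt_of_le_of_lt (le_trans hle (by exact_mod_cast Nat.le_succ n)) hc)
          (lt_irrefl _)
      · intro hc
        rw [hmemD] at hc
        rw [hc] at hle
        exact absurd (by exact_mod_cast hle) (by omega)
  have hstep : ∀ n ω, N (n + 1) ω =
      N n ω + (E n).indicator (fun ω => M (n + 1) ω - M n ω) ω := by
    intro n ω
    simp only [hN, Finset.sum_range_succ]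
    have h2 := hsplit n ω
    by_cases h : ω ∈ E n
    · rw [Set.indicator_of_mem h] at h2 ⊢
      rw [Set.indicator_of_mem h]
      linarith [h2]
    · rw [Set.indicator_of_notMem h] at h2 ⊢
      rw [Set.indicator_of_notMem h]
      linarith [h2]
  have hNadapted : StronglyAdapted 𝓕 N := by
    intro n
    refine StronglyMeasurable.add (Finset.stronglyMeasurable_fun_sum _ (fun j hj => ?_)) ?_
    · exact ((hM.stronglyAdapted j).indicator (hDmeas j)).mono
        (𝓕.mono (Nat.lt_succ_iff.1 (Finset.mem_range.1 hj)))
    · exact (hM.stronglyAdapted n).indicator (hEmeas n)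
  have hNint : ∀ n, Integrable (N n) μ := by
    intro n
    refine Integrable.add (integrable_finset_sum _ (fun j _ => ?_)) ?_
    · exact (hM.integrable j).indicator (hDm0 j)
    · exact (hM.integrable n).indicator (hEm0 n)
  have hNmart : Martingale N 𝓕 μ := by
    refine martingale_of_setIntegral_eq_succ hNadapted hNint (fun i s hs => ?_)
    have hrw : ∀ ω, N (i + 1) ω = N i ω + (E i).indicator (fun ω => M (i + 1) ω - M i ω) ω :=
      hstep i
    calc ∫ ω in s, N i ω ∂μ
        = ∫ ω in s, N i ω ∂μ + ∫ ω in s, (E i).indicator (fun ω => M (i + 1) ω - M i ω) ω ∂μ := by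
          have : ∫ ω in s, (E i).indicator (fun ω => M (i + 1) ω - M i ω) ω ∂μ = 0 := by
            rw [integral_indicator (hEm0 i), Measure.restrict_restrict (hEm0 i)]
            rw [integral_sub ((hM.integrable (i + 1)).integrableOn)
              ((hM.integrable i).integrableOn)]
            have := hM.setIntegral_eq (Nat.le_succ i) ((hEmeas i).inter hs)
            rw [sub_eq_zero]
            exact this.symm
          rw [this, add_zero]
      _ = ∫ ω in s, (N i ω + (E i).indicator (fun ω => M (i + 1) ω - M i ω) ω) ∂μ :=
          (integral_add ((hNint i).integrableOn)
            ((((hM.integrable (i + 1)).sub (hM.integrable i)).indicator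
              (hEm0 i)).integrableOn)).symm
      _ = ∫ ω in s, N (i + 1) ω ∂μ :=
          setIntegral_congr_fun (𝓕.le i s hs) (fun ω _ => (hrw ω).symm)
  set A : ℕ → ℝ := fun j => ∫ ω in D j, M j ω ∂μ with hA
  have hAnonneg : ∀ j, 0 ≤ A j := by
    intro j
    refine setIntegral_nonneg (hDm0 j) (fun ω hω => ?_)
    exact le_of_lt (((Tfin M T hTdef ω j).1 hω).2.1)
  have hAleB : ∀ j, A j ≤ B * (μ (D j)).toReal := by
    intro j
    rcases eq_or_ne (μ (D j)) 0 with hz | hz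
    · have : A j = 0 := by
        rw [hA]
        simp only
        rw [Measure.restrict_eq_zero.2 hz, integral_zero_measure]
      rw [this, hz]
      simp
    · have hj : 1 ≤ j := by
        by_contra hc
        push_neg at hc
        interval_cases j
        rw [hD0] at hz
        simp at hz
      exact hover j hj (pos_iff_ne_zero.2 hz)
  have hAle : ∀ j, A j ≤ |B| * (μ (D j)).toReal := fun j =>
    le_trans (hAleB j) (mul_le_mul_of_nonneg_right (le_abs_self B) ENNReal.toReal_nonneg)
  have hsumD : ∀ (t : Finset ℕ), ∑ j ∈ t, (μ (D j)).toReal ≤ 1 := by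
    intro t
    have h1 : ∑ j ∈ t, μ (D j) = μ (⋃ j ∈ t, D j) :=
      (measure_biUnion_finset (hDdisj.set_pairwise _) (fun j _ => hDm0 j)).symm
    have h2 : (∑ j ∈ t, μ (D j)).toReal = ∑ j ∈ t, (μ (D j)).toReal :=
      ENNReal.toReal_sum (fun j _ => measure_ne_top μ _)
    rw [← h2, h1]
    exact ENNReal.toReal_le_of_le_ofReal one_pos.le (by simpa using prob_le_one)
  have hsumA : ∀ n, ∑ j ∈ Finset.range (n + 1), A j ≤ |B| := by
    intro n
    calc ∑ j ∈ Finset.range (n + 1), A j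
        ≤ ∑ j ∈ Finset.range (n + 1), |B| * (μ (D j)).toReal :=
          Finset.sum_le_sum (fun j _ => hAle j)
      _ = |B| * ∑ j ∈ Finset.range (n + 1), (μ (D j)).toReal := by rw [Finset.mul_sum]
      _ ≤ |B| * 1 := mul_le_mul_of_nonneg_left (hsumD _) (abs_nonneg B)
      _ = |B| := mul_one _
  set F : ℕ → Ω → ℝ := fun n ω => ∑ j ∈ Finset.range (n + 1), (D j).indicator (M j) ω with hF
  have hFint : ∀ n, Integrable (F n) μ := fun n =>
    integrable_finset_sum _ (fun j _ => (hM.integrable j).indicator (hDm0 j))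
  have hFnn : ∀ n ω, 0 ≤ F n ω := by
    intro n ω
    refine Finset.sum_nonneg (fun j _ => ?_)
    exact Set.indicator_nonneg (fun ω hω => le_of_lt (((Tfin M T hTdef ω j).1 hω).2.1)) ω
  have hFint_eq : ∀ n, ∫ ω, F n ω ∂μ = ∑ j ∈ Finset.range (n + 1), A j := by
    intro n
    rw [hF]
    rw [integral_finset_sum _ (fun j _ => (hM.integrable j).indicator (hDm0 j))]
    exact Finset.sum_congr rfl (fun j _ => integral_indicator (hDm0 j))
  have hNleF : ∀ n, 1 ≤ n → ∀ ω, N n ω ≤ F n ω := by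
    intro n hn ω
    have : (E n).indicator (M n) ω ≤ 0 := by
      by_cases h : ω ∈ E n
      · rw [Set.indicator_of_mem h]
        exact Mnonpos M T hTdef n ω hn h
      · rw [Set.indicator_of_notMem h]
    calc N n ω = F n ω + (E n).indicator (M n) ω := rfl
      _ ≤ F n ω + 0 := by linarith
      _ = F n ω := add_zero _
  have hNmean : ∀ n, ∫ ω, N n ω ∂μ = 0 := by
    intro n
    have h0 : ∫ ω, N 0 ω ∂μ = 0 := by
      rw [show (fun ω => N 0 ω) = M 0 from funext hN0]
      exact hmean 0
    have := hNmart.setIntegral_eq (Nat.zero_le n) (s := Set.univ) MeasurableSet.univ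
    rw [Measure.restrict_univ] at this
    rw [← this]
    exact h0
  have hNabs : ∀ n, 1 ≤ n → ∫ ω, |N n ω| ∂μ ≤ 2 * |B| := by
    intro n hn
    have hid : ∀ ω, |N n ω| = 2 * max (N n ω) 0 - N n ω := by
      intro ω
      rcases le_total (N n ω) 0 with h | h
      · rw [abs_of_nonpos h, max_eq_right h]; ring
      · rw [abs_of_nonneg h, max_eq_left h]; ring
    calc ∫ ω, |N n ω| ∂μ = ∫ ω, (2 * max (N n ω) 0 - N n ω) ∂μ := by
          exact integral_congr_ae (Filter.Eventually.of_forall hid)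
      _ = 2 * ∫ ω, max (N n ω) 0 ∂μ - ∫ ω, N n ω ∂μ := by
          rw [integral_sub (((hNint n).pos_part).const_mul 2) (hNint n), integral_const_mul]
      _ = 2 * ∫ ω, max (N n ω) 0 ∂μ := by rw [hNmean n, sub_zero]
      _ ≤ 2 * ∫ ω, F n ω ∂μ := by
          have : ∫ ω, max (N n ω) 0 ∂μ ≤ ∫ ω, F n ω ∂μ :=
            integral_mono ((hNint n).pos_part) (hFint n)
              (fun ω => max_le (hNleF n hn ω) (hFnn n ω))
          linarith
      _ ≤ 2 * |B| := by
          have := le_trans (le_of_eq (hFint_eq n)) (hsumA n)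
          linarith
  have hbdd : ∀ n, eLpNorm (N n) 1 μ ≤ ENNReal.ofReal (2 * |B| + ∫ ω, |M 0 ω| ∂μ) := by
    intro n
    rw [eLpNorm_one_eq_lintegral_enorm, ← ofReal_integral_norm_eq_lintegral_enorm (hNint n)]
    refine ENNReal.ofReal_le_ofReal ?_
    have habs : ∫ ω, ‖N n ω‖ ∂μ = ∫ ω, |N n ω| ∂μ := by
      simp only [Real.norm_eq_abs]
    rw [habs]
    rcases Nat.eq_zero_or_pos n with rfl | hn
    · have h3 : (0:ℝ) ≤ 2 * |B| := by positivity
      simp only [hN0]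
      linarith
    · have h2 : (0:ℝ) ≤ ∫ ω, |M 0 ω| ∂μ := integral_nonneg (fun ω => abs_nonneg _)
      linarith [hNabs n hn]
  have hconv : ∀ᵐ ω ∂μ, ∃ c, Tendsto (fun n => N n ω) atTop (𝓝 c) := by
    refine hNmart.submartingale.exists_ae_tendsto_of_bdd
      (R := (2 * |B| + ∫ ω, |M 0 ω| ∂μ).toNNReal) (fun n => ?_)
    refine le_trans (hbdd n) (le_of_eq ?_)
    rfl
  have hNM : ∀ ω, T ω = ⊤ → ∀ n, N n ω = M n ω := by
    intro ω hT n
    have h1 : ∀ j, ω ∉ D j := by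
      intro j hc
      rw [hmemD, hT] at hc
      exact ENat.coe_ne_top j hc.symm
    have h2 : ω ∈ E n := by
      rw [hmemE, hT]
      exact lt_of_le_of_ne le_top (ENat.coe_ne_top n)
    simp only [hN]
    rw [Set.indicator_of_mem h2]
    rw [Finset.sum_eq_zero (fun j _ => Set.indicator_of_notMem (h1 j) _), zero_add]
  -- Part 1 : μ {T = ⊤} = 0
  have hcompl : {ω | T ω = ⊤} = (⋃ j, D j)ᶜ := by
      ext ω
      simp only [Set.mem_setOf_eq, Set.mem_compl_iff, Set.mem_iUnion, hmemD]
      constructor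
      · rintro h ⟨j, hj⟩
        exact ENat.coe_ne_top j (hj.symm.trans h)
      · intro h
        rcases eq_or_ne (T ω) ⊤ with ht | ht
        · exact ht
        · exact absurd (by lift T ω to ℕ using ht with m; exact ⟨m, rfl⟩) h
  have hTopMeas : MeasurableSet {ω | T ω = ⊤} := by
    rw [hcompl]
    exact (MeasurableSet.iUnion (fun j => hDm0 j)).compl
  have hTop0 : μ {ω | T ω = ⊤} = 0 := by
    set L := μ ({ω | T ω = ⊤}ᶜ) with hL
    have hclaim : ∀ ε : ℝ, 0 < ε →
        Filter.limsup (fun k : ℕ => μ {ω | ∃ n, k ≤ n ∧ ε < |M n ω - M k ω|}) atTop ≤ L := by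
      intro ε hε
      set C : ℕ → Set Ω := fun k => {ω | ∃ n, k ≤ n ∧ ε < |M n ω - M k ω|} with hC
      have hCmeas : ∀ k, MeasurableSet (C k) := by
        intro k
        have : C k = ⋃ n, {ω | k ≤ n ∧ ε < |M n ω - M k ω|} := by
          ext ω; simp [hC]
        rw [this]
        refine MeasurableSet.iUnion (fun n => ?_)
        by_cases h : k ≤ n
        · have : {ω | k ≤ n ∧ ε < |M n ω - M k ω|} = {ω | ε < |M n ω - M k ω|} := by
            ext ω; simp [h]
          rw [this]
          exact measurableSet_lt measurable_const ((hMmeas n).sub (hMmeas k)).abs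
        · have : {ω | k ≤ n ∧ ε < |M n ω - M k ω|} = ∅ := by
            ext ω; simp [h]
          rw [this]; exact MeasurableSet.empty
      set U : ℕ → Set Ω := fun k => ⋃ j, ⋃ (_ : k ≤ j), C j with hU
      have hUmeas : ∀ k, MeasurableSet (U k) :=
        fun k => MeasurableSet.iUnion (fun j => MeasurableSet.iUnion (fun _ => hCmeas j))
      have hUanti : Antitone U := by
        intro k k' hkk' ω hω
        simp only [hU, Set.mem_iUnion] at hω ⊢
        obtain ⟨j, hj, hωj⟩ := hω
        exact ⟨j, le_trans hkk' hj, hωj⟩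
      have hCU : ∀ k, C k ⊆ U k := fun k =>
        Set.subset_iUnion_of_subset k (Set.subset_iUnion_of_subset le_rfl (subset_refl _))
      have hnull : μ ({ω | T ω = ⊤} ∩ ⋂ k, U k) = 0 := by
        have hae : ∀ᵐ ω ∂μ, ω ∉ ({ω | T ω = ⊤} ∩ ⋂ k, U k) := by
          filter_upwards [hconv] with ω hc
          rintro ⟨hT, hUall⟩
          obtain ⟨c, hcv⟩ := hc
          have hMc : Tendsto (fun n => M n ω) atTop (𝓝 c) :=
            hcv.congr (fun n => hNM ω hT n)
          rw [Metric.tendsto_atTop] at hMc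
          obtain ⟨k0, hk0⟩ := hMc (ε / 2) (half_pos hε)
          have hUk0 : ω ∈ U k0 := Set.mem_iInter.1 hUall k0
          simp only [hU, Set.mem_iUnion] at hUk0
          obtain ⟨j, hj, hCj⟩ := hUk0
          obtain ⟨n, hn, habs⟩ := hCj
          have h1 := hk0 n (le_trans hj hn)
          have h2 := hk0 j hj
          rw [Real.dist_eq] at h1 h2
          have htri : |M n ω - M j ω| ≤ |M n ω - c| + |M j ω - c| := by
            have := abs_sub_le (M n ω) c (M j ω)
            rwa [abs_sub_comm c (M j ω)] at this
          linarith
        exact measure_eq_zero_iff_ae_notMem.2 hae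
      have htend : Tendsto (fun k => μ ({ω | T ω = ⊤} ∩ U k)) atTop (𝓝 0) := by
        have h1 : Tendsto (fun k => μ ({ω | T ω = ⊤} ∩ U k)) atTop
            (𝓝 (μ (⋂ k, {ω | T ω = ⊤} ∩ U k))) := by
          refine tendsto_measure_iInter_atTop
            (fun k => (hTopMeas.inter (hUmeas k)).nullMeasurableSet)
            (fun k k' hkk' => Set.inter_subset_inter_right _ (hUanti hkk'))
            ⟨0, measure_ne_top μ _⟩
        have h2 : (⋂ k, {ω | T ω = ⊤} ∩ U k) = {ω | T ω = ⊤} ∩ ⋂ k, U k := by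
          rw [Set.inter_iInter]
        rwa [h2, hnull] at h1
      have hle : ∀ k, μ (C k) ≤ L + μ ({ω | T ω = ⊤} ∩ U k) := by
        intro k
        have hsub : C k ⊆ {ω | T ω = ⊤}ᶜ ∪ ({ω | T ω = ⊤} ∩ U k) := by
          intro ω hω
          by_cases h : T ω = ⊤
          · exact Or.inr ⟨h, hCU k hω⟩
          · exact Or.inl h
        exact le_trans (measure_mono hsub) (measure_union_le _ _)
      have htend2 : Tendsto (fun k => L + μ ({ω | T ω = ⊤} ∩ U k)) atTop (𝓝 (L + 0)) :=
        htend.const_add L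
      calc Filter.limsup (fun k : ℕ => μ (C k)) atTop
          ≤ Filter.limsup (fun k => L + μ ({ω | T ω = ⊤} ∩ U k)) atTop :=
            Filter.limsup_le_limsup (Filter.Eventually.of_forall hle)
        _ = L + 0 := htend2.limsup_eq
        _ = L := add_zero L
    have h1L : (1 : ℝ≥0∞) ≤ L := by
      refine le_of_tendsto hwobble ?_
      filter_upwards [self_mem_nhdsWithin] with ε hε
      exact hclaim ε hε
    have hLval : L = 1 - μ {ω | T ω = ⊤} := by
      rw [hL, measure_compl hTopMeas (measure_ne_top μ _), measure_univ]
    by_contra hc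
    have : (1 : ℝ≥0∞) - μ {ω | T ω = ⊤} < 1 :=
      ENNReal.sub_lt_self one_ne_top one_ne_zero hc
    rw [← hLval] at this
    exact absurd h1L (not_le.2 this)
  -- Part 2
  have hUD : (⋃ j, D j) = {ω | T ω < ⊤} := by
    ext ω
    simp only [Set.mem_iUnion, hmemD, Set.mem_setOf_eq, lt_top_iff_ne_top]
    constructor
    · rintro ⟨j, hj⟩
      rw [hj]
      exact ENat.coe_ne_top j
    · intro h
      lift T ω to ℕ using h with m
      exact ⟨m, rfl⟩
  have hfin1 : μ {ω | T ω < ⊤} = 1 := by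
    have hset : {ω | T ω < ⊤} = {ω | T ω = ⊤}ᶜ := by
      ext ω; simp [lt_top_iff_ne_top]
    rw [hset, measure_compl hTopMeas (measure_ne_top μ _), hTop0, measure_univ, tsub_zero]
  refine ⟨hfin1, ?_⟩
  set g : Ω → ℝ := fun ω => M (T ω).toNat ω with hg
  have hgD : ∀ j ω, ω ∈ D j → g ω = M j ω := by
    intro j ω hω
    have h1 : (T ω).toNat = j := by
      rw [hmemD] at hω
      rw [hω]
      simp
    simp only [hg, h1]
  have haefin : ∀ᵐ ω ∂μ, T ω ≠ ⊤ := by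
    rw [ae_iff]
    have hset : {a | ¬T a ≠ ⊤} = {ω | T ω = ⊤} := by ext ω; simp
    rw [hset]
    exact hTop0
  have haetend : ∀ᵐ ω ∂μ, Tendsto (fun n => N n ω) atTop (𝓝 (g ω)) := by
    filter_upwards [haefin] with ω hω
    obtain ⟨m, hm⟩ := WithTop.ne_top_iff_exists.1 hω
    have hωD : ω ∈ D m := by
      rw [hmemD]
      exact_mod_cast hm.symm
    have hev : ∀ n, m ≤ n → N n ω = g ω := by
      intro n hn
      have hTω : T ω = (m : ℕ∞) := hωD
      have hEno : ω ∉ E n := by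
        rw [hmemE, hTω, not_lt]
        exact_mod_cast hn
      simp only [hN]
      rw [Set.indicator_of_notMem hEno, add_zero]
      rw [Finset.sum_eq_single m]
      · rw [Set.indicator_of_mem hωD]
        exact (hgD m ω hωD).symm
      · intro i _ hne
        refine Set.indicator_of_notMem (fun hc => ?_) _
        rw [hmemD, hTω] at hc
        have : m = i := by exact_mod_cast hc
        exact hne this.symm
      · intro hm2
        exact absurd (Finset.mem_range.2 (by omega)) hm2
    exact tendsto_const_nhds.congr'
      ((eventually_ge_atTop m).mono (fun n hn => (hev n hn).symm))
  have hgmeas : AEStronglyMeasurable g μ :=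
    aestronglyMeasurable_of_tendsto_ae atTop (fun n => (hNint n).1) haetend
  have hrestrict : μ.restrict (⋃ j, D j) = μ := by
    have hae : (⋃ j, D j) =ᵐ[μ] (Set.univ : Set Ω) := by
      rw [ae_eq_univ, ← hcompl]
      exact hTop0
    rw [Measure.restrict_congr_set hae, Measure.restrict_univ]
  have hnorm : ∀ j ω, ω ∈ D j → (‖g ω‖₊ : ℝ≥0∞) = ENNReal.ofReal (M j ω) := by
    intro j ω hω
    rw [hgD j ω hω]
    exact Real.enorm_eq_ofReal (le_of_lt ((Tfin M T hTdef ω j).1 hω).2.1)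
  have hlint : ∫⁻ ω, ‖g ω‖₊ ∂μ ≤ ENNReal.ofReal |B| := by
    calc ∫⁻ ω, ‖g ω‖₊ ∂μ = ∫⁻ ω in ⋃ j, D j, ‖g ω‖₊ ∂μ := by rw [hrestrict]
      _ = ∑' j, ∫⁻ ω in D j, ‖g ω‖₊ ∂μ := lintegral_iUnion hDm0 hDdisj _
      _ = ∑' j, ENNReal.ofReal (A j) := by
          refine tsum_congr (fun j => ?_)
          have h1 : ∫⁻ ω in D j, ‖g ω‖₊ ∂μ = ∫⁻ ω in D j, ENNReal.ofReal (M j ω) ∂μ :=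
            setLIntegral_congr_fun (hDm0 j) (fun ω hω => hnorm j ω hω)
          rw [h1, ← ofReal_integral_eq_lintegral_ofReal (hM.integrable j).integrableOn
            ((ae_restrict_iff' (hDm0 j)).2 (ae_of_all _
              (fun ω hω => le_of_lt ((Tfin M T hTdef ω j).1 hω).2.1)))]
      _ ≤ ∑' j, ENNReal.ofReal |B| * μ (D j) := by
          refine ENNReal.tsum_le_tsum (fun j => ?_)
          calc ENNReal.ofReal (A j) ≤ ENNReal.ofReal (|B| * (μ (D j)).toReal) :=
                ENNReal.ofReal_le_ofReal (hAle j)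
            _ = ENNReal.ofReal |B| * ENNReal.ofReal ((μ (D j)).toReal) :=
                ENNReal.ofReal_mul (abs_nonneg B)
            _ = ENNReal.ofReal |B| * μ (D j) := by rw [ENNReal.ofReal_toReal (measure_ne_top μ _)]
      _ = ENNReal.ofReal |B| * μ (⋃ j, D j) := by
          rw [ENNReal.tsum_mul_left, measure_iUnion hDdisj hDm0]
      _ ≤ ENNReal.ofReal |B| * 1 := mul_le_mul_right prob_le_one _
      _ = ENNReal.ofReal |B| := mul_one _
  have hgint : Integrable g μ := by
    refine ⟨hgmeas, ?_⟩
    rw [HasFiniteIntegral]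
    exact lt_of_le_of_lt hlint ENNReal.ofReal_lt_top
  have hAg : (fun j => ∫ ω in D j, g ω ∂μ) = A := by
    funext j
    exact setIntegral_congr_fun (hDm0 j) (fun ω hω => hgD j ω hω)
  have hAsum : HasSum A (∫ ω, g ω ∂μ) := by
    have h1 := hasSum_integral_iUnion hDm0 hDdisj hgint.integrableOn
    rw [hAg] at h1
    rwa [hrestrict] at h1
  have hsummu : Summable (fun j => (μ (D j)).toReal) := by
    refine ENNReal.summable_toReal ?_
    rw [← measure_iUnion hDdisj hDm0]
    exact measure_ne_top μ _
  have htsum1 : ∑' j, (μ (D j)).toReal = 1 := by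
    have h3 : ∑' j, μ (D j) = 1 := by rw [← measure_iUnion hDdisj hDm0, hUD, hfin1]
    calc ∑' j, (μ (D j)).toReal = (∑' j, μ (D j)).toReal :=
          (ENNReal.tsum_toReal_eq (fun j => measure_ne_top μ _)).symm
      _ = 1 := by rw [h3]; simp
  calc ∫ ω, M (T ω).toNat ω ∂μ = ∫ ω, g ω ∂μ := rfl
    _ = ∑' j, A j := hAsum.tsum_eq.symm
    _ ≤ ∑' j, B * (μ (D j)).toReal :=
        Summable.tsum_le_tsum hAleB hAsum.summable (hsummu.mul_left B)
    _ = B * ∑' j, (μ (D j)).toReal := tsum_mul_left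
    _ = B := by rw [htsum1, mul_one]
end

section
/- Let X_1, X_2, … be independent random variables with P(X_j = (2^j − 1)/j) = 2^{−j} and P(X_j = −1/j) = 1 − 2^{−j} for each j ≥ 1 (so each X_j has mean zero), let S_n = X_1 + ⋯ + X_n, and let T = inf{n ≥ 1 : S_n > 0} (T = ∞ if no such n exists). Then P(T = ∞) > 0. -/
open MeasureTheory ProbabilityTheory Filter Set Topology ENNReal

lemma prod_one_sub_bound' : ∀ n : ℕ, 1 ≤ n →
    (1:ℝ)/4 + (2:ℝ)⁻¹ ^ n / 2 ≤ ∏ j ∈ Finset.Icc 1 n, (1 - (2:ℝ)⁻¹ ^ j) := by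
  intro n hn
  induction n, hn using Nat.le_induction with
  | base => norm_num
  | succ n hn ih =>
    rw [Finset.prod_Icc_succ_top (by omega)]
    have hx : (2:ℝ)⁻¹ ^ n ≤ 1/2 := by
      calc (2:ℝ)⁻¹ ^ n ≤ (2:ℝ)⁻¹ ^ 1 := by
            apply pow_le_pow_of_le_one (by norm_num) (by norm_num) hn
        _ = 1/2 := by norm_num
    have hxpos : (0:ℝ) < (2:ℝ)⁻¹ ^ n := by positivity
    have hs : (2:ℝ)⁻¹ ^ (n+1) = (2:ℝ)⁻¹ ^ n / 2 := by
      rw [pow_succ]; ring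
    nlinarith [hxpos, hx, ih]

lemma prod_one_sub_bound (n : ℕ) :
    (1:ℝ)/4 ≤ ∏ j ∈ Finset.Icc 1 n, (1 - (2:ℝ)⁻¹ ^ j) := by
  rcases Nat.eq_zero_or_pos n with h | h
  · subst h; norm_num
  · have := prod_one_sub_bound' n h
    have : (0:ℝ) ≤ (2:ℝ)⁻¹ ^ n / 2 := by positivity
    linarith [prod_one_sub_bound' n h]

/-- (Counter-example 2.) Let `X_1, X_2, …` be independent with
`P(X_j = (2^j − 1)/j) = 2^{−j}` and `P(X_j = −1/j) = 1 − 2^{−j}` (mean-zero),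
`S_n = X_1 + ⋯ + X_n`, and `T = inf{n ≥ 1 : S_n > 0}`.  Then `P(T = ∞) > 0`. -/
theorem heavy_jump_walk_first_positive_time_infinite_with_positive_probability
    {Ω : Type*} {m0 : MeasurableSpace Ω} {μ : Measure Ω} [IsProbabilityMeasure μ]
    (X : ℕ → Ω → ℝ)
    (hmeas : ∀ j, Measurable (X j))
    (hindep : iIndepFun X μ)
    (hup : ∀ j : ℕ, 1 ≤ j →
      μ {ω | X j ω = ((2 : ℝ) ^ j - 1) / (j : ℝ)} = ENNReal.ofReal ((2 : ℝ)⁻¹ ^ j))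
    (hdown : ∀ j : ℕ, 1 ≤ j →
      μ {ω | X j ω = -(1 / (j : ℝ))} = ENNReal.ofReal (1 - (2 : ℝ)⁻¹ ^ j))
    (S : ℕ → Ω → ℝ)
    (hS : ∀ n ω, S n ω = ∑ j ∈ Finset.Icc 1 n, X j ω)
    (T : Ω → ℕ∞)
    (hTdef : ∀ ω, T ω = sInf ((fun n : ℕ => (n : ℕ∞)) '' {n : ℕ | 1 ≤ n ∧ 0 < S n ω})) :
    0 < μ {ω | T ω = ⊤} := by
  classical
  set E : ℕ → Set Ω := fun j => X j ⁻¹' {-(1 / (j:ℝ))} with hE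
  set F : ℕ → Set Ω := fun n => ⋂ j ∈ Finset.Icc 1 n, E j with hF
  have hEmeas : ∀ j, MeasurableSet (E j) := fun j =>
    (hmeas j) (measurableSet_singleton _)
  have hFmeas : ∀ n, MeasurableSet (F n) := fun n =>
    Finset.measurableSet_biInter _ fun j _ => hEmeas j
  have hFanti : Antitone F := by
    intro a b hab
    exact Set.biInter_mono (fun j hj => Finset.mem_Icc.mpr
      ⟨(Finset.mem_Icc.mp hj).1, le_trans (Finset.mem_Icc.mp hj).2 hab⟩) (fun j _ => le_refl _)
  -- measure of F n
  have hFmeasure : ∀ n, ENNReal.ofReal ((1:ℝ)/4) ≤ μ (F n) := by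
    intro n
    have h1 : μ (F n) = ∏ j ∈ Finset.Icc 1 n, μ (E j) := by
      exact hindep.measure_inter_preimage_eq_mul (Finset.Icc 1 n)
        (fun j _ => measurableSet_singleton _)
    have h2 : ∀ j ∈ Finset.Icc 1 n, μ (E j) = ENNReal.ofReal (1 - (2:ℝ)⁻¹ ^ j) := by
      intro j hj
      have hj1 : 1 ≤ j := (Finset.mem_Icc.mp hj).1
      have : E j = {ω | X j ω = -(1 / (j:ℝ))} := by
        ext ω; simp [hE, Set.mem_preimage]
      rw [this, hdown j hj1]
    rw [h1, Finset.prod_congr rfl h2, ← ENNReal.ofReal_prod_of_nonneg]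
    · exact ENNReal.ofReal_le_ofReal (prod_one_sub_bound n)
    · intro j hj
      have hle : (2:ℝ)⁻¹ ^ j ≤ 1 := pow_le_one₀ (by norm_num) (by norm_num)
      linarith
  have hkey : ENNReal.ofReal ((1:ℝ)/4) ≤ μ (⋂ n, F n) := by
    rw [hFanti.measure_iInter (fun n => (hFmeas n).nullMeasurableSet)
      ⟨0, measure_ne_top μ _⟩]
    exact le_iInf fun n => hFmeasure n
  have hsub : (⋂ n, F n) ⊆ {ω | T ω = ⊤} := by
    intro ω hω
    have hX : ∀ j : ℕ, 1 ≤ j → X j ω = -(1 / (j:ℝ)) := by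
      intro j hj
      have : ω ∈ F j := Set.mem_iInter.mp hω j
      have := Set.mem_iInter₂.mp this j (Finset.mem_Icc.mpr ⟨hj, le_refl j⟩)
      simpa [hE] using this
    have hempty : {n : ℕ | 1 ≤ n ∧ 0 < S n ω} = ∅ := by
      ext n
      simp only [Set.mem_setOf_eq, Set.mem_empty_iff_false, iff_false, not_and, not_lt]
      intro hn
      rw [hS]
      apply Finset.sum_nonpos
      intro j hj
      rw [hX j (Finset.mem_Icc.mp hj).1]
      have : (0:ℝ) ≤ 1 / (j:ℝ) := by positivity
      linarith
    simp [hTdef ω, hempty]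
  calc (0:ℝ≥0∞) < ENNReal.ofReal ((1:ℝ)/4) := by norm_num
    _ ≤ μ (⋂ n, F n) := hkey
    _ ≤ μ {ω | T ω = ⊤} := measure_mono hsub
end

section
/- Fix a > 0 and let X_1, X_2, … be i.i.d. mean-zero random variables for which there exists 0 < c < 1 with P(X_i > y) = c·e^{−ay} for all y > 0. Let S_n = X_1 + ⋯ + X_n and, for h ≥ 0, let T_h = inf{n ≥ 1 : S_n > h} (T_h = ∞ if no such n exists). Then E[S_{T_h} · 1(T_h < ∞)] = (h + 1/a) · P(T_h < ∞). -/
open MeasureTheory ProbabilityTheory Filter Set Topology ENNReal Real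


lemma aux_exp_integral {a : ℝ} (ha : 0 < a) (t : ℝ) :
    ∫ s in Ioi (0:ℝ), Real.exp (-a * (t + s)) = Real.exp (-a * t) / a := by
  have : ∀ s : ℝ, Real.exp (-a * (t + s)) = Real.exp (-a*t) * Real.exp (-(a * s)) := by
    intro s; rw [← Real.exp_add]; ring_nf
  simp_rw [this]
  rw [MeasureTheory.integral_const_mul]
  have h1 : ∫ s in Ioi (0:ℝ), Real.exp (-(a * s)) = a⁻¹ • ∫ x in Ioi (a * 0), Real.exp (-x) :=
    integral_comp_mul_left_Ioi (fun x => Real.exp (-x)) 0 ha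
  rw [h1, mul_zero, integral_exp_neg_Ioi, neg_zero, Real.exp_zero]
  simp [smul_eq_mul, div_eq_mul_inv, mul_comm]

lemma aux_exp_integrable {a : ℝ} (ha : 0 < a) (t : ℝ) :
    IntegrableOn (fun s => Real.exp (-a * (t + s))) (Ioi (0:ℝ)) := by
  have : ∀ s : ℝ, Real.exp (-a * (t + s)) = Real.exp (-a*t) * Real.exp (-a * s) := by
    intro s; rw [← Real.exp_add]; ring_nf
  simp_rw [this]
  exact (exp_neg_integrableOn_Ioi 0 ha).const_mul _


lemma aux_tail {Ω : Type*} [MeasurableSpace Ω] {μ : Measure Ω} {W : Ω → ℝ} {a c : ℝ}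
    (htail : ∀ y : ℝ, 0 < y → μ {ω | y < W ω} = ENNReal.ofReal (c * Real.exp (-a * y)))
    {t : ℝ} (ht : 0 ≤ t) : μ {ω | t < W ω} = ENNReal.ofReal (c * Real.exp (-a * t)) := by
  rcases ht.lt_or_eq with h | h
  · exact htail t h
  · subst h
    have hU : {ω | (0:ℝ) < W ω} = ⋃ n : ℕ, {ω | (1:ℝ)/(n+1) < W ω} := by
      ext ω
      simp only [mem_setOf_eq, mem_iUnion]
      constructor
      · intro hw
        obtain ⟨n, hn⟩ := exists_nat_one_div_lt hw
        exact ⟨n, hn⟩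
      · rintro ⟨n, hn⟩
        refine lt_trans ?_ hn
        positivity
    have hmono : Monotone (fun n : ℕ => {ω | (1:ℝ)/(n+1) < W ω}) := by
      intro m n hmn ω hω
      simp only [mem_setOf_eq] at *
      refine lt_of_le_of_lt ?_ hω
      have : (m:ℝ) ≤ n := Nat.cast_le.mpr hmn
      apply one_div_le_one_div_of_le
      · positivity
      · linarith
    have h1 : Tendsto (fun n : ℕ => μ {ω | (1:ℝ)/(n+1) < W ω}) atTop
        (𝓝 (μ (⋃ n : ℕ, {ω | (1:ℝ)/(n+1) < W ω}))) := tendsto_measure_iUnion_atTop hmono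
    have h2 : (fun n : ℕ => μ {ω | (1:ℝ)/(n+1) < W ω})
        = fun n : ℕ => ENNReal.ofReal (c * Real.exp (-a * (1/(n+1)))) := by
      funext n; exact htail _ (by positivity)
    rw [h2] at h1
    have h3 : Tendsto (fun n : ℕ => ENNReal.ofReal (c * Real.exp (-a * (1/(n+1))))) atTop
        (𝓝 (ENNReal.ofReal (c * Real.exp (-a * 0)))) := by
      apply ENNReal.tendsto_ofReal
      apply Filter.Tendsto.const_mul
      apply (Real.continuous_exp.tendsto _).comp
      apply Filter.Tendsto.const_mul
      simpa using tendsto_one_div_add_atTop_nhds_zero_nat (𝕜 := ℝ)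
    rw [← hU] at h1
    exact tendsto_nhds_unique h1 h3


lemma aux_moment {Ω : Type*} [MeasurableSpace Ω] {μ : Measure Ω} [IsProbabilityMeasure μ]
    {W : Ω → ℝ} (hW : Measurable W) {a c h : ℝ} (ha : 0 < a) (hc : 0 ≤ c) (hh : 0 ≤ h)
    (htail : ∀ y : ℝ, 0 < y → μ {ω | y < W ω} = ENNReal.ofReal (c * Real.exp (-a * y)))
    {t : ℝ} (ht : 0 ≤ t) :
    ∫⁻ ω, {ω | t < W ω}.indicator (fun ω => ENNReal.ofReal (h - t + W ω)) ω ∂μ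
      = ENNReal.ofReal ((h + 1/a) * (c * Real.exp (-a * t))) := by
  have hset : MeasurableSet {ω | t < W ω} := measurableSet_lt measurable_const hW
  have hdecomp : ∀ ω, {ω | t < W ω}.indicator (fun ω => ENNReal.ofReal (h - t + W ω)) ω
      = ENNReal.ofReal (W ω - t) + {ω | t < W ω}.indicator (fun _ => ENNReal.ofReal h) ω := by
    intro ω
    by_cases hω : t < W ω
    · simp only [Set.indicator_apply, mem_setOf_eq, hω, if_true]
      rw [← ENNReal.ofReal_add (by linarith) hh]
      ring_nf
    · simp only [Set.indicator_apply, mem_setOf_eq, hω, if_false]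
      simp only [add_zero]
      rw [ENNReal.ofReal_eq_zero.mpr (by push_neg at hω; linarith)]
  simp only [hdecomp]
  rw [lintegral_add_right]
  swap
  · exact Measurable.indicator measurable_const hset
  have hpart2 : ∫⁻ ω, {ω | t < W ω}.indicator (fun _ => ENNReal.ofReal h) ω ∂μ
      = ENNReal.ofReal h * ENNReal.ofReal (c * Real.exp (-a * t)) := by
    rw [lintegral_indicator hset _, setLIntegral_const, aux_tail htail ht, mul_comm]
  have hpart1 : ∫⁻ ω, ENNReal.ofReal (W ω - t) ∂μ
      = ENNReal.ofReal (c * Real.exp (-a * t) / a) := by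
    have heq : ∀ ω, ENNReal.ofReal (W ω - t) = ENNReal.ofReal (max (W ω - t) 0) := by
      intro ω
      rcases le_total (W ω - t) 0 with hle | hle
      · rw [ENNReal.ofReal_eq_zero.mpr hle, max_eq_right hle]
        simp
      · rw [max_eq_left hle]
    simp only [heq]
    have hlc := lintegral_eq_lintegral_meas_lt μ (f := fun ω => max (W ω - t) 0)
      (Filter.Eventually.of_forall fun ω => le_max_right _ _)
      ((hW.sub measurable_const).max measurable_const).aemeasurable
    rw [hlc]
    have hcongr : ∀ s ∈ Ioi (0:ℝ), μ {ω | s < max (W ω - t) 0}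
        = ENNReal.ofReal (c * Real.exp (-a * (t + s))) := by
      intro s hs
      have : {ω | s < max (W ω - t) 0} = {ω | t + s < W ω} := by
        ext ω
        simp only [mem_setOf_eq, lt_max_iff]
        constructor
        · rintro (h1 | h1)
          · linarith
          · exact absurd h1 (not_lt.mpr (le_of_lt hs)).elim
        · intro h1; left; linarith
      rw [this, htail _ (by linarith [mem_Ioi.mp hs])]
    rw [setLIntegral_congr_fun measurableSet_Ioi hcongr]
    rw [← ofReal_integral_eq_lintegral_ofReal (aux_exp_integrable ha t |>.const_mul c)
      (Eventually.of_forall fun s => by positivity)]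
    rw [MeasureTheory.integral_const_mul, aux_exp_integral ha t]
    rw [mul_div_assoc]
  rw [hpart1, hpart2]
  have hexp : (0:ℝ) ≤ c * Real.exp (-a * t) := by positivity
  rw [← ENNReal.ofReal_mul hh, ← ENNReal.ofReal_add (by positivity) (by positivity)]
  congr 1
  field_simp
  ring

lemma aux_sInf_nonempty {s : Set ℕ} (hs : s.Nonempty) :
    sInf ((fun n : ℕ => (n : ℕ∞)) '' s) = ((sInf s : ℕ) : ℕ∞) := by
  apply le_antisymm
  · exact sInf_le ⟨sInf s, Nat.sInf_mem hs, rfl⟩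
  · apply le_sInf
    rintro x ⟨k, hk, rfl⟩
    simp only []
    exact_mod_cast Nat.sInf_le hk

lemma aux_sInf_empty : sInf ((fun n : ℕ => (n : ℕ∞)) '' (∅ : Set ℕ)) = ⊤ := by
  simp

lemma aux_coe_lt_top (n : ℕ) : (n : ℕ∞) < ⊤ := by
  exact_mod_cast WithTop.coe_lt_top n

lemma aux_key {Ω : Type*} {m0 : MeasurableSpace Ω} {μ : Measure Ω} [IsProbabilityMeasure μ]
    {a c h : ℝ} (ha : 0 < a) (hc : 0 ≤ c) (hh : 0 ≤ h)
    {X : ℕ → Ω → ℝ} (hmeas : ∀ i, Measurable (X i))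
    (hindep : iIndepFun X μ)
    (htail : ∀ i : ℕ, ∀ y : ℝ, 0 < y →
      μ {ω | y < X i ω} = ENNReal.ofReal (c * Real.exp (-a * y)))
    {S : ℕ → Ω → ℝ} (hS : ∀ n ω, S n ω = ∑ i ∈ Finset.Icc 1 n, X i ω)
    (n : ℕ) :
    ∫⁻ ω, ({ω | h < S (n+1) ω ∧ ∀ k ∈ Finset.Icc 1 n, S k ω ≤ h}.indicator
        (fun ω => ENNReal.ofReal (S (n+1) ω))) ω ∂μ
      = ENNReal.ofReal (h + 1/a) * μ {ω | h < S (n+1) ω ∧ ∀ k ∈ Finset.Icc 1 n, S k ω ≤ h} := by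
  classical
  set A : Set Ω := {ω | h < S (n+1) ω ∧ ∀ k ∈ Finset.Icc 1 n, S k ω ≤ h} with hA
  -- the tuple of the first n variables
  set G : Ω → ({x // x ∈ Finset.Icc 1 n} → ℝ) := fun ω i => X (↑i) ω with hG
  have hGmeas : Measurable G := measurable_pi_lambda _ (fun i => hmeas i)
  -- sum functionals on the tuple space
  set ψf : ({x // x ∈ Finset.Icc 1 n} → ℝ) → ℝ := fun v => ∑ i, v i with hψf
  set σf : ℕ → ({x // x ∈ Finset.Icc 1 n} → ℝ) → ℝ :=
    fun k v => ∑ i : {x // x ∈ Finset.Icc 1 n}, if (i : ℕ) ≤ k then v i else 0 with hσf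
  have hψmeas : Measurable ψf := Finset.measurable_sum _ (fun i _ => measurable_pi_apply i)
  have hσmeas : ∀ k, Measurable (σf k) := by
    intro k
    apply Finset.measurable_sum
    intro i _
    by_cases hik : (i : ℕ) ≤ k
    · simp only [hik, if_true]
      exact measurable_pi_apply i
    · simp only [hik, if_false]
      exact measurable_const
  -- identification of the functionals composed with G
  have hψG : ∀ ω, ψf (G ω) = S n ω := by
    intro ω
    rw [hS]
    exact Finset.sum_coe_sort (Finset.Icc 1 n) (fun i => X i ω)
  have hσG : ∀ k, k ∈ Finset.Icc 1 n → ∀ ω, σf k (G ω) = S k ω := by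
    intro k hk ω
    simp only [Finset.mem_Icc] at hk
    have h1 : σf k (G ω) = ∑ i ∈ Finset.Icc 1 n, (if i ≤ k then X i ω else 0) :=
      Finset.sum_coe_sort (Finset.Icc 1 n) (fun i => if i ≤ k then X i ω else 0)
    rw [h1, hS]
    rw [← Finset.sum_subset (Finset.Icc_subset_Icc_right hk.2) (fun i hi hik => ?_)]
    · apply Finset.sum_congr rfl
      intro i hi
      simp only [Finset.mem_Icc] at hi
      rw [if_pos hi.2]
    · simp only [Finset.mem_Icc] at hi hik
      rw [if_neg (by omega)]
  -- the sets on the tuple space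
  set C : Set ({x // x ∈ Finset.Icc 1 n} → ℝ) :=
    {v | ψf v ≤ h ∧ ∀ k ∈ Finset.Icc 1 n, σf k v ≤ h} with hC
  have hCmeas : MeasurableSet C := by
    have : C = {v | ψf v ≤ h} ∩ ⋂ k ∈ Finset.Icc 1 n, {v | σf k v ≤ h} := by
      ext v
      simp only [hC, mem_setOf_eq, mem_inter_iff, mem_iInter]
    rw [this]
    exact (measurableSet_le hψmeas measurable_const).inter
      (MeasurableSet.biInter (Finset.Icc 1 n).countable_toSet
        (fun k _ => measurableSet_le (hσmeas k) measurable_const))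
  set D : Set (({x // x ∈ Finset.Icc 1 n} → ℝ) × ℝ) :=
    {q | q.1 ∈ C ∧ h - ψf q.1 < q.2} with hD
  have hDmeas : MeasurableSet D := by
    have : D = (Prod.fst ⁻¹' C) ∩ {q | h - ψf q.1 < q.2} := rfl
    rw [this]
    exact (hCmeas.preimage measurable_fst).inter
      (measurableSet_lt ((measurable_const.sub hψmeas).comp measurable_fst) measurable_snd)
  -- preimage of D under the pair map is A
  have hS0 : ∀ ω, S 0 ω = 0 := by
    intro ω; rw [hS]; simp
  have hstep : ∀ ω, S (n+1) ω = S n ω + X (n+1) ω := by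
    intro ω
    rw [hS, hS, Finset.sum_Icc_succ_top (by omega : 1 ≤ n + 1)]
  have hSnh : ∀ ω, (∀ k ∈ Finset.Icc 1 n, S k ω ≤ h) → S n ω ≤ h := by
    intro ω hk
    rcases Nat.eq_zero_or_pos n with h0 | h0
    · rw [h0, hS0]; exact hh
    · exact hk n (Finset.mem_Icc.mpr ⟨h0, le_refl n⟩)
  have hpre : ∀ ω, ((G ω, X (n+1) ω) ∈ D) ↔ ω ∈ A := by
    intro ω
    simp only [hD, hC, hA, mem_setOf_eq, hψG]
    constructor
    · rintro ⟨⟨_, hall⟩, hlt⟩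
      refine ⟨by rw [hstep]; linarith, fun k hk => by rw [← hσG k hk ω]; exact hall k hk⟩
    · rintro ⟨hlt, hall⟩
      have hSn : S n ω ≤ h := hSnh ω hall
      refine ⟨⟨hSn, fun k hk => by rw [hσG k hk ω]; exact hall k hk⟩, ?_⟩
      rw [hstep] at hlt; linarith
  have hAmeas : MeasurableSet A := by
    have : A = (fun ω => (G ω, X (n+1) ω)) ⁻¹' D := by
      ext ω; exact (hpre ω).symm
    rw [this]
    exact hDmeas.preimage (hGmeas.prodMk (hmeas (n+1)))
  -- independence
  have hdisj : Disjoint ({n+1} : Finset ℕ) (Finset.Icc 1 n) := by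
    simp only [Finset.disjoint_singleton_left, Finset.mem_Icc]
    omega
  have hind0 := hindep.indepFun_finset {n+1} (Finset.Icc 1 n) hdisj hmeas
  haveI hPG : IsProbabilityMeasure (μ.map G) := Measure.isProbabilityMeasure_map hGmeas.aemeasurable
  haveI hPX : IsProbabilityMeasure (μ.map (X (n+1))) :=
    Measure.isProbabilityMeasure_map (hmeas (n+1)).aemeasurable
  have hind : IndepFun (X (n+1)) G μ := by
    have := hind0.comp (φ := fun v : ({x // x ∈ ({n+1} : Finset ℕ)} → ℝ) =>
        v ⟨n+1, Finset.mem_singleton_self _⟩) (ψ := id)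
      (measurable_pi_apply _ : Measurable (fun v : ({x // x ∈ ({n+1} : Finset ℕ)} → ℝ) =>
        v ⟨n+1, Finset.mem_singleton_self _⟩)) measurable_id
    exact this
  have hmapprod : μ.map (fun ω => (G ω, X (n+1) ω)) = (μ.map G).prod (μ.map (X (n+1))) :=
    (indepFun_iff_map_prod_eq_prod_map_map hGmeas.aemeasurable
      (hmeas (n+1)).aemeasurable).mp hind.symm
  -- the integrand on the product space
  set Φ : (({x // x ∈ Finset.Icc 1 n} → ℝ) × ℝ) → ENNReal :=
    D.indicator (fun q => ENNReal.ofReal (ψf q.1 + q.2)) with hΦ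
  have hΦmeas : Measurable Φ :=
    (ENNReal.measurable_ofReal.comp
      ((hψmeas.comp measurable_fst).add measurable_snd)).indicator hDmeas
  have hpoint : ∀ ω, Φ (G ω, X (n+1) ω) = A.indicator (fun ω => ENNReal.ofReal (S (n+1) ω)) ω := by
    intro ω
    rw [hΦ]
    by_cases hω : ω ∈ A
    · rw [indicator_of_mem ((hpre ω).mpr hω), indicator_of_mem hω]
      rw [hψG, ← hstep]
    · rw [indicator_of_notMem (fun hd => hω ((hpre ω).mp hd)), indicator_of_notMem hω]
  -- rewrite the lintegral through the product measure
  have hmain : ∫⁻ ω, A.indicator (fun ω => ENNReal.ofReal (S (n+1) ω)) ω ∂μ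
      = ∫⁻ v, ∫⁻ x, Φ (v, x) ∂(μ.map (X (n+1))) ∂(μ.map G) := by
    calc ∫⁻ ω, A.indicator (fun ω => ENNReal.ofReal (S (n+1) ω)) ω ∂μ
        = ∫⁻ ω, Φ (G ω, X (n+1) ω) ∂μ := (lintegral_congr hpoint).symm
      _ = ∫⁻ q, Φ q ∂(μ.map (fun ω => (G ω, X (n+1) ω))) :=
          (lintegral_map hΦmeas (hGmeas.prodMk (hmeas (n+1)))).symm
      _ = ∫⁻ q, Φ q ∂((μ.map G).prod (μ.map (X (n+1)))) := by rw [hmapprod]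
      _ = ∫⁻ v, ∫⁻ x, Φ (v, x) ∂(μ.map (X (n+1))) ∂(μ.map G) :=
          MeasureTheory.lintegral_prod _ hΦmeas.aemeasurable
  -- inner integral evaluation
  have hinner : ∀ v, ∫⁻ x, Φ (v, x) ∂(μ.map (X (n+1)))
      = C.indicator (fun v =>
          ENNReal.ofReal ((h + 1/a) * (c * Real.exp (-a * (h - ψf v))))) v := by
    intro v
    by_cases hv : v ∈ C
    · rw [indicator_of_mem hv]
      set t : ℝ := h - ψf v with htdef
      have ht : 0 ≤ t := by
        have := hv.1
        simp only [htdef]; linarith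
      have hfun : ∀ x : ℝ, Φ (v, x)
          = {x : ℝ | t < x}.indicator (fun x => ENNReal.ofReal (h - t + x)) x := by
        intro x
        rw [hΦ]
        simp only [Set.indicator_apply, mem_setOf_eq]
        by_cases hx : t < x
        · rw [if_pos (show (v, x) ∈ D from ⟨hv, hx⟩), if_pos hx]
          congr 1
          simp only [htdef]; ring
        · rw [if_neg (fun hd : (v,x) ∈ D => hx hd.2), if_neg hx]
      rw [lintegral_congr hfun]
      have hindmeas : Measurable
          (fun x : ℝ => {x : ℝ | t < x}.indicator (fun x => ENNReal.ofReal (h - t + x)) x) := by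
        apply Measurable.indicator
        · exact ENNReal.measurable_ofReal.comp (measurable_const.add measurable_id)
        · exact measurableSet_lt measurable_const measurable_id
      rw [lintegral_map hindmeas (hmeas (n+1))]
      have hcomp : ∀ ω, {x : ℝ | t < x}.indicator
            (fun x => ENNReal.ofReal (h - t + x)) (X (n+1) ω)
          = {ω | t < X (n+1) ω}.indicator
            (fun ω => ENNReal.ofReal (h - t + X (n+1) ω)) ω := by
        intro ω
        simp only [Set.indicator_apply, mem_setOf_eq]
      rw [lintegral_congr hcomp]
      exact aux_moment (hmeas (n+1)) ha hc hh (htail (n+1)) ht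
    · rw [indicator_of_notMem hv]
      have hzero : ∀ x : ℝ, Φ (v, x) = 0 := by
        intro x
        rw [hΦ]
        exact indicator_of_notMem (fun hd : (v,x) ∈ D => hv hd.1) _
      rw [lintegral_congr hzero, lintegral_zero]
  -- measure of A through the product measure
  have hmeasA : μ A = ∫⁻ v, C.indicator
      (fun v => ENNReal.ofReal (c * Real.exp (-a * (h - ψf v)))) v ∂(μ.map G) := by
    have h1 : μ A = μ.map (fun ω => (G ω, X (n+1) ω)) D := by
      rw [Measure.map_apply (hGmeas.prodMk (hmeas (n+1))) hDmeas]
      congr 1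
      ext ω
      exact (hpre ω).symm
    rw [h1, hmapprod, Measure.prod_apply hDmeas]
    apply lintegral_congr
    intro v
    by_cases hv : v ∈ C
    · rw [indicator_of_mem hv]
      have hpreim : Prod.mk v ⁻¹' D = {x : ℝ | h - ψf v < x} := by
        ext x
        simp only [mem_preimage, hD, mem_setOf_eq]
        exact ⟨fun hd => hd.2, fun hx => ⟨hv, hx⟩⟩
      rw [hpreim]
      have ht : (0:ℝ) ≤ h - ψf v := by linarith [hv.1]
      have h2 : (μ.map (X (n+1))) {x : ℝ | h - ψf v < x} = μ {ω | h - ψf v < X (n+1) ω} := by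
        exact Measure.map_apply (hmeas (n+1)) measurableSet_Ioi
      rw [h2]
      exact aux_tail (htail (n+1)) ht
    · rw [indicator_of_notMem hv]
      have hpreim : Prod.mk v ⁻¹' D = ∅ := by
        ext x
        simp only [mem_preimage, hD, mem_setOf_eq, mem_empty_iff_false, iff_false]
        exact fun hd => hv hd.1
      rw [hpreim, measure_empty]
  -- put it together
  rw [hmain, lintegral_congr hinner, hmeasA]
  have hsplit : ∀ v, C.indicator (fun v =>
        ENNReal.ofReal ((h + 1/a) * (c * Real.exp (-a * (h - ψf v))))) v
      = ENNReal.ofReal (h + 1/a) *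
        C.indicator (fun v => ENNReal.ofReal (c * Real.exp (-a * (h - ψf v)))) v := by
    intro v
    by_cases hv : v ∈ C
    · rw [indicator_of_mem hv, indicator_of_mem hv,
        ENNReal.ofReal_mul (by positivity : (0:ℝ) ≤ h + 1/a)]
    · rw [indicator_of_notMem hv, indicator_of_notMem hv, mul_zero]
  rw [lintegral_congr hsplit]
  rw [lintegral_const_mul]
  exact (ENNReal.measurable_ofReal.comp
    ((Real.continuous_exp.measurable).comp
      ((measurable_const.sub hψmeas).const_mul (-a)) |>.const_mul c)).indicator hCmeas

/-- Fix `a > 0` and let `X_1, X_2, …` be i.i.d. mean-zero random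
variables with `P(X_i > y) = c·e^{−ay}` for all `y > 0`, for some `0 < c < 1`.  With
`S_n = X_1 + ⋯ + X_n` and `T_h = inf{n ≥ 1 : S_n > h}` for `h ≥ 0`, we have
`E[S_{T_h} · 1(T_h < ∞)] = (h + 1/a) · P(T_h < ∞)`. -/

theorem exponential_tail_walk_overshoot
    {Ω : Type*} {m0 : MeasurableSpace Ω} {μ : Measure Ω} [IsProbabilityMeasure μ]
    (a : ℝ) (ha : 0 < a)
    (c : ℝ) (hc0 : 0 < c) (hc1 : c < 1)
    (X : ℕ → Ω → ℝ)
    (hmeas : ∀ i, Measurable (X i))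
    (hindep : iIndepFun X μ)
    (hident : ∀ i j : ℕ, IdentDistrib (X i) (X j) μ μ)
    (hint : ∀ i, Integrable (X i) μ)
    (hmean : ∀ i, ∫ ω, X i ω ∂μ = 0)
    (htail : ∀ i : ℕ, ∀ y : ℝ, 0 < y →
      μ {ω | y < X i ω} = ENNReal.ofReal (c * Real.exp (-a * y)))
    (S : ℕ → Ω → ℝ)
    (hS : ∀ n ω, S n ω = ∑ i ∈ Finset.Icc 1 n, X i ω)
    (h : ℝ) (hh : 0 ≤ h)
    (Th : Ω → ℕ∞)
    (hThdef : ∀ ω, Th ω =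
      sInf ((fun n : ℕ => (n : ℕ∞)) '' {n : ℕ | 1 ≤ n ∧ h < S n ω})) :
    ∫ ω, ({ω | Th ω < ⊤}.indicator (fun ω => S (Th ω).toNat ω)) ω ∂μ =
      (h + 1 / a) * (μ {ω | Th ω < ⊤}).toReal := by
  classical
  have hSmeas : ∀ n, Measurable (S n) := by
    intro n
    have : S n = fun ω => ∑ i ∈ Finset.Icc 1 n, X i ω := funext (hS n)
    rw [this]
    exact Finset.measurable_sum _ (fun i _ => hmeas i)
  set A : ℕ → Set Ω := fun n => {ω | h < S (n+1) ω ∧ ∀ k ∈ Finset.Icc 1 n, S k ω ≤ h}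
    with hAdef
  -- characterization of A n as the event Th = n+1
  have hATh : ∀ n ω, ω ∈ A n ↔ Th ω = ((n+1 : ℕ) : ℕ∞) := by
    intro n ω
    constructor
    · rintro ⟨hlt, hall⟩
      have hne : {m : ℕ | 1 ≤ m ∧ h < S m ω}.Nonempty := ⟨n+1, by omega, hlt⟩
      rw [hThdef ω, aux_sInf_nonempty hne]
      have hmem := Nat.sInf_mem hne
      obtain ⟨h1m, hm⟩ := hmem
      have hle : sInf {m : ℕ | 1 ≤ m ∧ h < S m ω} ≤ n+1 := Nat.sInf_le ⟨by omega, hlt⟩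
      have hge : ¬ sInf {m : ℕ | 1 ≤ m ∧ h < S m ω} ≤ n := by
        intro hc2
        rcases Nat.eq_zero_or_pos n with h0 | h0
        · omega
        · exact absurd hm (not_lt.mpr (hall _ (Finset.mem_Icc.mpr ⟨h1m, hc2⟩)))
      congr 1
      omega
    · intro hT
      have hne : {m : ℕ | 1 ≤ m ∧ h < S m ω}.Nonempty := by
        by_contra hcon
        rw [Set.not_nonempty_iff_eq_empty] at hcon
        rw [hThdef ω, hcon, Set.image_empty, _root_.sInf_empty] at hT
        exact absurd hT.symm (ne_of_lt (aux_coe_lt_top (n+1)))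
      rw [hThdef ω, aux_sInf_nonempty hne] at hT
      have hT' : sInf {m : ℕ | 1 ≤ m ∧ h < S m ω} = n+1 := by exact_mod_cast hT
      obtain ⟨h1m, hm⟩ := Nat.sInf_mem hne
      rw [hT'] at hm
      refine ⟨hm, fun k hk => ?_⟩
      simp only [Finset.mem_Icc] at hk
      by_contra hcon
      push_neg at hcon
      have : sInf {m : ℕ | 1 ≤ m ∧ h < S m ω} ≤ k := Nat.sInf_le ⟨hk.1, hcon⟩
      omega
  have hAmeas : ∀ n, MeasurableSet (A n) := by
    intro n
    have hAeq : A n = {ω | h < S (n+1) ω} ∩ ⋂ k ∈ Finset.Icc 1 n, {ω | S k ω ≤ h} := by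
      ext ω
      simp only [hAdef, mem_setOf_eq, mem_inter_iff, mem_iInter]
    rw [hAeq]
    exact (measurableSet_lt measurable_const (hSmeas _)).inter
      (MeasurableSet.biInter (Finset.Icc 1 n).countable_toSet fun k _ =>
        measurableSet_le (hSmeas k) measurable_const)
  have hdisj : Pairwise (Function.onFun Disjoint A) := by
    intro m n hmn
    simp only [Function.onFun]
    rw [Set.disjoint_left]
    intro ω hm hn
    have h1 := (hATh m ω).mp hm
    have h2 := (hATh n ω).mp hn
    rw [h1] at h2
    have : m + 1 = n + 1 := by exact_mod_cast h2
    omega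
  have hunion : {ω | Th ω < ⊤} = ⋃ n, A n := by
    ext ω
    simp only [mem_setOf_eq, mem_iUnion]
    constructor
    · intro hlt
      have hne : {m : ℕ | 1 ≤ m ∧ h < S m ω}.Nonempty := by
        by_contra hcon
        rw [Set.not_nonempty_iff_eq_empty] at hcon
        rw [hThdef ω, hcon, Set.image_empty, _root_.sInf_empty] at hlt
        exact lt_irrefl _ hlt
      obtain ⟨h1m, hm⟩ := Nat.sInf_mem hne
      refine ⟨sInf {m : ℕ | 1 ≤ m ∧ h < S m ω} - 1, (hATh _ ω).mpr ?_⟩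
      rw [hThdef ω, aux_sInf_nonempty hne]
      congr 1
      omega
    · rintro ⟨n, hn⟩
      rw [(hATh n ω).mp hn]
      exact aux_coe_lt_top _
  -- the ENNReal-valued version of the integrand
  set F : Ω → ℝ≥0∞ :=
    fun ω => ∑' m : ℕ, (A m).indicator (fun ω => ENNReal.ofReal (S (m+1) ω)) ω with hFdef
  have hFmeas : Measurable F := Measurable.ennreal_tsum fun m =>
    (ENNReal.measurable_ofReal.comp (hSmeas (m+1))).indicator (hAmeas m)
  have hcases : ∀ ω, ({ω | Th ω < ⊤}.indicator (fun ω => S (Th ω).toNat ω)) ω = (F ω).toReal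
      ∧ ENNReal.ofReal (({ω | Th ω < ⊤}.indicator (fun ω => S (Th ω).toNat ω)) ω) = F ω := by
    intro ω
    by_cases hω : Th ω < ⊤
    · have hωU : ω ∈ ⋃ n, A n := by rw [← hunion]; exact hω
      obtain ⟨m, hm⟩ := mem_iUnion.mp hωU
      have hT := (hATh m ω).mp hm
      have hSpos : 0 ≤ S (m+1) ω := le_of_lt (lt_of_le_of_lt hh hm.1)
      have hFval : F ω = ENNReal.ofReal (S (m+1) ω) := by
        have hsingle : (∑' k : ℕ, (A k).indicator (fun ω => ENNReal.ofReal (S (k+1) ω)) ω)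
            = (A m).indicator (fun ω => ENNReal.ofReal (S (m+1) ω)) ω := by
          apply tsum_eq_single m
          intro b hb
          apply indicator_of_notMem
          intro hbmem
          have hb2 := (hATh b ω).mp hbmem
          rw [hT] at hb2
          have : m + 1 = b + 1 := by exact_mod_cast hb2
          omega
        calc F ω = (A m).indicator (fun ω => ENNReal.ofReal (S (m+1) ω)) ω := hsingle
          _ = ENNReal.ofReal (S (m+1) ω) := indicator_of_mem hm _
      have hIval : ({ω | Th ω < ⊤}.indicator (fun ω => S (Th ω).toNat ω)) ω = S (m+1) ω := by
        rw [Set.indicator_of_mem (show ω ∈ {ω | Th ω < ⊤} from hω)]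
        congr 1
        rw [hT]
        rfl
      refine ⟨?_, ?_⟩
      · rw [hIval, hFval, ENNReal.toReal_ofReal hSpos]
      · rw [hIval, hFval]
    · have hIval : ({ω | Th ω < ⊤}.indicator (fun ω => S (Th ω).toNat ω)) ω = 0 :=
        Set.indicator_of_notMem (show ω ∉ {ω | Th ω < ⊤} from hω) _
      have hFval : F ω = 0 := by
        have : (∑' k : ℕ, (A k).indicator (fun ω => ENNReal.ofReal (S (k+1) ω)) ω) = 0 := by
          apply ENNReal.tsum_eq_zero.mpr
          intro m
          apply indicator_of_notMem
          intro hmem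
          have hωin : ω ∈ {ω | Th ω < ⊤} := by
            rw [hunion]
            exact mem_iUnion.mpr ⟨m, hmem⟩
          exact hω hωin
        exact this
      exact ⟨by rw [hIval, hFval]; simp, by rw [hIval, hFval]; simp⟩
  have hIeq : (fun ω => ({ω | Th ω < ⊤}.indicator (fun ω => S (Th ω).toNat ω)) ω)
      = fun ω => (F ω).toReal := funext fun ω => (hcases ω).1
  have hnn : 0 ≤ᵐ[μ] fun ω => (F ω).toReal :=
    Filter.Eventually.of_forall fun ω => ENNReal.toReal_nonneg
  have haem : AEStronglyMeasurable (fun ω => (F ω).toReal) μ :=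
    (ENNReal.measurable_toReal.comp hFmeas).aestronglyMeasurable
  rw [hIeq, integral_eq_lintegral_of_nonneg_ae hnn haem]
  have hlin : ∫⁻ ω, ENNReal.ofReal ((F ω).toReal) ∂μ
      = ENNReal.ofReal (h + 1/a) * μ {ω | Th ω < ⊤} := by
    calc ∫⁻ ω, ENNReal.ofReal ((F ω).toReal) ∂μ
        = ∫⁻ ω, F ω ∂μ := lintegral_congr fun ω => ENNReal.ofReal_toReal
          (by rw [← (hcases ω).2]; exact ENNReal.ofReal_ne_top)
      _ = ∑' m : ℕ, ∫⁻ ω, (A m).indicator (fun ω => ENNReal.ofReal (S (m+1) ω)) ω ∂μ :=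
          lintegral_tsum fun m =>
            ((ENNReal.measurable_ofReal.comp (hSmeas (m+1))).indicator (hAmeas m)).aemeasurable
      _ = ∑' m : ℕ, ENNReal.ofReal (h + 1/a) * μ (A m) :=
          tsum_congr fun m => aux_key ha hc0.le hh hmeas hindep htail hS m
      _ = ENNReal.ofReal (h + 1/a) * ∑' m : ℕ, μ (A m) := ENNReal.tsum_mul_left
      _ = ENNReal.ofReal (h + 1/a) * μ (⋃ m, A m) := by rw [measure_iUnion hdisj hAmeas]
      _ = ENNReal.ofReal (h + 1/a) * μ {ω | Th ω < ⊤} := by rw [← hunion]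
  rw [hlin, ENNReal.toReal_mul, ENNReal.toReal_ofReal (by positivity)]
end
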